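/- arXiv:1610.03387 — 4 statements merged into one kernel-verified Lean document; each statement's English description precedes it below -/
import Mathlib

section
/- Let 0 < T ≤ ∞ and let f : [0,T] → ℂ be measurable with ∫_0^T |f(t)| e^{-ℓt} dt < ∞ for some ℓ ≥ 0. If f is right-continuous at 0 and f(0) ≠ 0, then F(λ) := ∫_0^T f(t) e^{-λt} dt satisfies F(λ) ~ f(0)/λ as λ → ∞, i.e. lim_{λ→∞} λ F(λ) = f(0). -/
open MeasureTheory Filter intervalIntegral
open scoped ENNReal

lemma aux_exp_int (lam : ℝ) (hlam : lam ≠ 0) (δ : ℝ) :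
    ∫ t in (0:ℝ)..δ, Real.exp (-(lam*t)) = (1 - Real.exp (-(lam*δ)))/lam := by
  have D : ∀ x : ℝ, HasDerivAt (fun y : ℝ => Real.exp (-(lam*y)) / (-lam))
      (Real.exp (-(lam*x))) x := by
    intro x
    have h1 : HasDerivAt (fun y : ℝ => -(lam*y)) (-lam) x := by
      simpa using ((hasDerivAt_id x).const_mul (-lam))
    have h2 := (Real.hasDerivAt_exp (-(lam*x))).comp x h1
    have h3 := h2.div_const (-lam)
    simpa [mul_div_assoc, mul_div_cancel_right₀, hlam] using h3
  rw [integral_deriv_eq_sub' _ (funext fun x => (D x).deriv) (fun x _ => (D x).differentiableAt)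
    (by fun_prop)]
  simp only [mul_zero, neg_zero, Real.exp_zero]
  rw [div_sub_div_same, div_neg, ← neg_div, neg_sub]

lemma aux_cexp_int (lam : ℝ) (hlam : lam ≠ 0) {δ : ℝ} (hδ : 0 ≤ δ) :
    ∫ t in Set.Icc (0:ℝ) δ, Complex.exp (-((lam:ℂ)*t)) = (1 - Complex.exp (-(lam*δ)))/lam := by
  rw [integral_Icc_eq_integral_Ioc, ← intervalIntegral.integral_of_le hδ]
  have hc : (-(lam:ℂ)) ≠ 0 := by simpa using (Complex.ofReal_ne_zero.mpr hlam)
  have := integral_exp_mul_complex (a := 0) (b := δ) hc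
  simp only [neg_mul] at this
  rw [this]
  push_cast
  simp only [Complex.ofReal_zero, mul_zero, neg_zero, Complex.exp_zero]
  rw [div_neg, ← neg_div, neg_sub]


/-- Let `0 < T ≤ ∞` and `f : [0,T] → ℂ` be measurable with
`∫_0^T ‖f t‖ e^{-ℓ t} dt < ∞` for some `ℓ ≥ 0`.  If `f` is right-continuous
at `0` and `f 0 ≠ 0`, then `F(λ) = ∫_0^T f t e^{-λ t} dt ∼ f 0 / λ` as
`λ → ∞`, i.e. `λ F(λ) → f 0`. -/
theorem laplace_leading_term (T : ℝ≥0∞) (hT : 0 < T) (f : ℝ → ℂ)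
    (S : Set ℝ) (hS : S = {t : ℝ | 0 ≤ t ∧ ENNReal.ofReal t < T})
    (hmeas : Measurable f) (ℓ : ℝ) (hℓ : 0 ≤ ℓ)
    (hint : IntegrableOn (fun t => ‖f t‖ * Real.exp (-ℓ * t)) S)
    (hcont : Tendsto f (nhdsWithin 0 (Set.Ici 0)) (nhds (f 0)))
    (hne : f 0 ≠ 0) :
    Tendsto (fun lam : ℝ => (lam : ℂ) * ∫ t in S, f t * Complex.exp (-(lam * t)))
      atTop (nhds (f 0)) := by
  have hSm : MeasurableSet S := by
    rw [hS]
    exact (measurableSet_Ici (a := (0:ℝ))).inter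
      (ENNReal.measurable_ofReal measurableSet_Iio)
  have hS0 : S ⊆ Set.Ici (0:ℝ) := by rw [hS]; exact fun t ht => ht.1
  -- integrability of the integrand for every lam ≥ ℓ
  have hInt : ∀ lam : ℝ, ℓ ≤ lam →
      IntegrableOn (fun t => f t * Complex.exp (-(lam * t))) S := by
    intro lam hlam
    apply Integrable.mono hint
    · exact (hmeas.aestronglyMeasurable.mul
        ((Complex.continuous_exp.comp (by continuity)).aestronglyMeasurable)).restrict
    · filter_upwards [ae_restrict_mem hSm] with t ht
      have ht0 : 0 ≤ t := hS0 ht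
      rw [norm_mul, Complex.norm_exp,
        Real.norm_eq_abs, abs_of_nonneg (by positivity)]
      have hre : (-(↑lam * ↑t : ℂ)).re = -(lam * t) := by
        simp
      rw [hre]
      exact mul_le_mul_of_nonneg_left (Real.exp_le_exp.mpr (by nlinarith)) (norm_nonneg _)
  obtain ⟨T₀, hT₀pos, hT₀⟩ : ∃ T₀ : ℝ, 0 < T₀ ∧ ENNReal.ofReal T₀ < T := by
    rcases eq_or_ne T ⊤ with h | h
    · exact ⟨1, one_pos, by simp [h]⟩
    · have htr : 0 < T.toReal := ENNReal.toReal_pos hT.ne' h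
      exact ⟨T.toReal / 2, by positivity,
        (ENNReal.ofReal_lt_iff_lt_toReal (by positivity) h).mpr (by linarith)⟩
  set M : ℝ := ∫ t in S, ‖f t‖ * Real.exp (-ℓ * t) with hMdef
  have hM0 : 0 ≤ M := integral_nonneg (fun t => by positivity)
  rw [Metric.tendsto_nhds]
  intro ε hε
  obtain ⟨δ₁, hδ₁pos, hδ₁⟩ := Metric.tendsto_nhdsWithin_nhds.mp hcont (ε/4) (by positivity)
  set δ : ℝ := min (δ₁/2) T₀ with hδdef
  have hδpos : 0 < δ := lt_min (by positivity) hT₀pos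
  have hδT : ENNReal.ofReal δ < T :=
    lt_of_le_of_lt (ENNReal.ofReal_le_ofReal (min_le_right _ _)) hT₀
  have hIccS : Set.Icc (0:ℝ) δ ⊆ S := by
    rw [hS]; rintro t ⟨ht0, htδ⟩
    exact ⟨ht0, lt_of_le_of_lt (ENNReal.ofReal_le_ofReal htδ) hδT⟩
  have hband : ∀ t ∈ Set.Icc (0:ℝ) δ, ‖f t - f 0‖ ≤ ε/4 := by
    intro t ht
    have hd : dist t 0 < δ₁ := by
      rw [Real.dist_eq, sub_zero, abs_of_nonneg ht.1]
      calc t ≤ δ := ht.2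
        _ ≤ δ₁/2 := min_le_left _ _
        _ < δ₁ := by linarith
    have := hδ₁ ht.1 hd
    rw [dist_eq_norm] at this
    exact this.le
  -- the three eventual facts
  have ev1 : ∀ᶠ lam : ℝ in atTop, max ℓ 1 ≤ lam := eventually_ge_atTop _
  have ev2 : ∀ᶠ lam : ℝ in atTop, lam * Real.exp (-((lam - ℓ)*δ)) * M < ε/4 := by
    have h1 : Tendsto (fun x : ℝ => x * Real.exp (-x)) atTop (nhds 0) := by
      simpa using Real.tendsto_pow_mul_exp_neg_atTop_nhds_zero 1
    have h2 : Tendsto (fun lam : ℝ => δ * lam) atTop atTop :=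
      Tendsto.const_mul_atTop hδpos tendsto_id
    have h3 := h1.comp h2
    have h4 := h3.const_mul ((1/δ) * Real.exp (ℓ*δ) * M)
    have h5 : (fun lam : ℝ => lam * Real.exp (-((lam - ℓ)*δ)) * M)
        = fun lam : ℝ => ((1/δ) * Real.exp (ℓ*δ) * M) * ((δ*lam) * Real.exp (-(δ*lam))) := by
      funext lam
      rw [show -((lam - ℓ)*δ) = ℓ*δ + -(δ*lam) by ring, Real.exp_add]
      field_simp
    rw [show (ε/4 : ℝ) = ε/4 from rfl]
    have h6 : Tendsto (fun lam : ℝ => lam * Real.exp (-((lam - ℓ)*δ)) * M) atTop (nhds 0) := by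
      rw [h5]
      simpa [Function.comp] using h4
    exact h6.eventually_lt_const (by positivity)
  have ev3 : ∀ᶠ lam : ℝ in atTop, ‖f 0‖ * Real.exp (-(lam*δ)) < ε/4 := by
    have h1 : Tendsto (fun lam : ℝ => lam * δ) atTop atTop :=
      Tendsto.atTop_mul_const hδpos tendsto_id
    have h2 := (Real.tendsto_exp_neg_atTop_nhds_zero.comp h1).const_mul ‖f 0‖
    have h3 : Tendsto (fun lam : ℝ => ‖f 0‖ * Real.exp (-(lam*δ))) atTop (nhds 0) := by
      simpa [Function.comp] using h2
    exact h3.eventually_lt_const (by positivity)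
  filter_upwards [ev1, ev2, ev3] with lam hlam htail hE
  have hlamℓ : ℓ ≤ lam := le_trans (le_max_left _ _) hlam
  have hlam0 : 0 < lam := lt_of_lt_of_le one_pos (le_trans (le_max_right _ _) hlam)
  have hlamne : (lam : ℂ) ≠ 0 := Complex.ofReal_ne_zero.mpr hlam0.ne'
  -- integrabilities on the pieces
  have hfIcc : IntegrableOn (fun t => f t * Complex.exp (-(lam * t))) (Set.Icc 0 δ) :=
    (hInt lam hlamℓ).mono_set hIccS
  have hcexp : Continuous (fun t : ℝ => Complex.exp (-((lam:ℂ) * t))) :=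
    Complex.continuous_exp.comp (continuous_const.mul Complex.continuous_ofReal).neg
  have hexpIcc : IntegrableOn (fun t : ℝ => Complex.exp (-(lam * t))) (Set.Icc 0 δ) :=
    hcexp.continuousOn.integrableOn_Icc
  have hdiffInt : IntegrableOn (fun t => f t * Complex.exp (-(lam * t))) (S \ Set.Icc 0 δ) :=
    (hInt lam hlamℓ).mono_set Set.diff_subset
  -- decomposition
  have hsplit : (∫ t in S, f t * Complex.exp (-(lam * t)))
      = (∫ t in Set.Icc 0 δ, f t * Complex.exp (-(lam * t)))
        + ∫ t in S \ Set.Icc 0 δ, f t * Complex.exp (-(lam * t)) := by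
    rw [← integral_inter_add_diff measurableSet_Icc (hInt lam hlamℓ),
      Set.inter_eq_self_of_subset_right hIccS]
  have hsubInt : IntegrableOn (fun t => (f t - f 0) * Complex.exp (-(lam * t)))
      (Set.Icc 0 δ) := by
    have := hfIcc.sub (hexpIcc.const_mul (f 0))
    simpa [sub_mul, Pi.sub_def] using this
  have hsub : (∫ t in Set.Icc 0 δ, f t * Complex.exp (-(lam * t)))
      = (∫ t in Set.Icc 0 δ, (f t - f 0) * Complex.exp (-(lam * t)))
        + f 0 * ∫ t in Set.Icc 0 δ, Complex.exp (-(lam * t)) := by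
    rw [← MeasureTheory.integral_const_mul, ← integral_add hsubInt (hexpIcc.const_mul (f 0))]
    congr 1
    funext t
    ring
  have hval : (∫ t in Set.Icc (0:ℝ) δ, Complex.exp (-((lam:ℂ) * t)))
      = (1 - Complex.exp (-(lam*δ)))/lam := aux_cexp_int lam hlam0.ne' hδpos.le
  -- main rearrangement
  have hkey : (lam : ℂ) * ∫ t in S, f t * Complex.exp (-(lam * t))
      = ((lam : ℂ) * ∫ t in Set.Icc 0 δ, (f t - f 0) * Complex.exp (-(lam * t)))
        + (f 0 * (1 - Complex.exp (-(lam*δ))))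
        + (lam : ℂ) * ∫ t in S \ Set.Icc 0 δ, f t * Complex.exp (-(lam * t)) := by
    rw [hsplit, hsub, hval]
    field_simp
  rw [dist_eq_norm, hkey]
  have hA : ‖(lam : ℂ) * ∫ t in Set.Icc 0 δ, (f t - f 0) * Complex.exp (-(lam * t))‖
      ≤ ε/4 := by
    rw [norm_mul, Complex.norm_real, Real.norm_eq_abs, abs_of_pos hlam0]
    have h1 : ‖∫ t in Set.Icc 0 δ, (f t - f 0) * Complex.exp (-(lam * t))‖
        ≤ ∫ t in Set.Icc (0:ℝ) δ, (ε/4) * Real.exp (-(lam * t)) := by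
      refine (MeasureTheory.norm_integral_le_integral_norm _).trans ?_
      refine integral_mono_of_nonneg (Filter.Eventually.of_forall fun t => norm_nonneg _)
        ((continuous_const.mul
          (Real.continuous_exp.comp (continuous_const.mul continuous_id).neg)).continuousOn.integrableOn_Icc) ?_
      filter_upwards [ae_restrict_mem measurableSet_Icc] with t ht
      rw [norm_mul, Complex.norm_exp]
      have hre : (-(↑lam * ↑t : ℂ)).re = -(lam * t) := by simp
      rw [hre]
      exact mul_le_mul_of_nonneg_right (hband t ht) (Real.exp_pos _).le
    have h2 : (∫ t in Set.Icc (0:ℝ) δ, (ε/4) * Real.exp (-(lam * t)))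
        = (ε/4) * ((1 - Real.exp (-(lam*δ)))/lam) := by
      rw [MeasureTheory.integral_const_mul, integral_Icc_eq_integral_Ioc,
        ← intervalIntegral.integral_of_le hδpos.le, aux_exp_int lam hlam0.ne']
    calc lam * ‖∫ t in Set.Icc 0 δ, (f t - f 0) * Complex.exp (-(lam * t))‖
        ≤ lam * ((ε/4) * ((1 - Real.exp (-(lam*δ)))/lam)) := by
          rw [← h2]; exact mul_le_mul_of_nonneg_left h1 hlam0.le
      _ = (ε/4) * (1 - Real.exp (-(lam*δ))) := by
          rw [mul_comm lam, mul_assoc, div_mul_cancel₀ _ hlam0.ne']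
      _ ≤ ε/4 := by nlinarith [Real.exp_pos (-(lam*δ))]
  have hB : ‖(lam : ℂ) * ∫ t in S \ Set.Icc 0 δ, f t * Complex.exp (-(lam * t))‖
      ≤ lam * Real.exp (-((lam - ℓ)*δ)) * M := by
    rw [norm_mul, Complex.norm_real, Real.norm_eq_abs, abs_of_pos hlam0]
    have h1 : ‖∫ t in S \ Set.Icc 0 δ, f t * Complex.exp (-(lam * t))‖
        ≤ ∫ t in S \ Set.Icc (0:ℝ) δ, Real.exp (-((lam - ℓ)*δ)) * (‖f t‖ * Real.exp (-ℓ * t)) := by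
      refine (MeasureTheory.norm_integral_le_integral_norm _).trans ?_
      refine integral_mono_of_nonneg (Filter.Eventually.of_forall fun t => norm_nonneg _)
        ((hint.mono_set Set.diff_subset).const_mul _) ?_
      filter_upwards [ae_restrict_mem (hSm.diff measurableSet_Icc)] with t ht
      have ht0 : 0 ≤ t := hS0 ht.1
      have htδ : δ ≤ t := by
        by_contra h
        exact ht.2 ⟨ht0, (not_le.mp h).le⟩
      rw [norm_mul, Complex.norm_exp]
      have hre : (-(↑lam * ↑t : ℂ)).re = -(lam * t) := by simp
      rw [hre]
      have hexps : Real.exp (-(lam*t)) ≤ Real.exp (-((lam - ℓ)*δ)) * Real.exp (-ℓ * t) := by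
        rw [← Real.exp_add]
        apply Real.exp_le_exp.mpr
        nlinarith
      calc ‖f t‖ * Real.exp (-(lam*t))
          ≤ ‖f t‖ * (Real.exp (-((lam - ℓ)*δ)) * Real.exp (-ℓ * t)) :=
            mul_le_mul_of_nonneg_left hexps (norm_nonneg _)
        _ = Real.exp (-((lam - ℓ)*δ)) * (‖f t‖ * Real.exp (-ℓ * t)) := by ring
    have h2 : (∫ t in S \ Set.Icc (0:ℝ) δ, Real.exp (-((lam - ℓ)*δ)) * (‖f t‖ * Real.exp (-ℓ * t)))
        ≤ Real.exp (-((lam - ℓ)*δ)) * M := by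
      rw [MeasureTheory.integral_const_mul]
      refine mul_le_mul_of_nonneg_left ?_ (Real.exp_pos _).le
      exact setIntegral_mono_set hint (Filter.Eventually.of_forall fun t => by positivity)
        Set.diff_subset.eventuallyLE
    calc lam * ‖∫ t in S \ Set.Icc 0 δ, f t * Complex.exp (-(lam * t))‖
        ≤ lam * (Real.exp (-((lam - ℓ)*δ)) * M) :=
          mul_le_mul_of_nonneg_left (h1.trans h2) hlam0.le
      _ = lam * Real.exp (-((lam - ℓ)*δ)) * M := by ring
  have hEq : ((lam : ℂ) * ∫ t in Set.Icc 0 δ, (f t - f 0) * Complex.exp (-(lam * t)))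
        + (f 0 * (1 - Complex.exp (-(lam*δ))))
        + ((lam : ℂ) * ∫ t in S \ Set.Icc 0 δ, f t * Complex.exp (-(lam * t))) - f 0
      = ((lam : ℂ) * ∫ t in Set.Icc 0 δ, (f t - f 0) * Complex.exp (-(lam * t)))
        + (-(f 0 * Complex.exp (-(lam*δ))))
        + ((lam : ℂ) * ∫ t in S \ Set.Icc 0 δ, f t * Complex.exp (-(lam * t))) := by
    ring
  rw [hEq]
  have hEnorm : ‖-(f 0 * Complex.exp (-((lam:ℂ)*δ)))‖ = ‖f 0‖ * Real.exp (-(lam*δ)) := by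
    rw [norm_neg, norm_mul, Complex.norm_exp]
    congr 1
    simp
  calc ‖_ + _ + _‖ ≤ ‖_ + _‖ + ‖_‖ := norm_add_le _ _
    _ ≤ ‖_‖ + ‖_‖ + ‖_‖ := by gcongr; exact norm_add_le _ _
    _ < ε/4 + ε/4 + ε/4 := by
        apply add_lt_add_of_lt_of_le
        · exact add_lt_add_of_le_of_lt hA (lt_of_le_of_lt hEnorm.le hE)
        · exact hB.trans htail.le
    _ < ε := by linarith
end

section
/- (Watson's lemma, one-term version) Let 0 < T ≤ ∞ and f : [0,T] → ℂ be measurable with ∫_0^T |f(t)| e^{-ℓt} dt < ∞ for some ℓ ≥ 0. Suppose f(t) = a t^b + O(t^{b'}) as t → 0⁺, where -1 < b < b' are real and a ∈ ℂ, a ≠ 0. Then ∫_0^T f(t) e^{-λt} dt = a Γ(b+1) λ^{-b-1} + O(λ^{-b'-1}) as λ → ∞ with λ > 0. -/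
open MeasureTheory Filter
open scoped ENNReal

lemma watson_aux_integrable {c r : ℝ} (hc : -1 < c) (hr : 0 < r) :
    IntegrableOn (fun t : ℝ => t ^ c * Real.exp (-(r * t))) (Set.Ioi 0) := by
  have h0 : IntegrableOn (fun x : ℝ => Real.exp (-x) * x ^ c) (Set.Ioi 0) := by
    simpa using Real.GammaIntegral_convergent (show 0 < c + 1 by linarith)
  have h1 : IntegrableOn (fun t : ℝ => Real.exp (-(r * t)) * (r * t) ^ c) (Set.Ioi 0) := by
    have := (integrableOn_Ioi_comp_mul_left_iff
      (fun x : ℝ => Real.exp (-x) * x ^ c) 0 hr).2 (by simpa using h0)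
    simpa using this
  have h2 : IntegrableOn (fun t : ℝ => r ^ c * (t ^ c * Real.exp (-(r * t)))) (Set.Ioi 0) := by
    apply h1.congr_fun _ measurableSet_Ioi
    intro t ht
    simp only []
    rw [Real.mul_rpow hr.le (le_of_lt ht)]
    ring
  have h3 : IntegrableOn (fun t : ℝ => (r ^ c)⁻¹ * (r ^ c * (t ^ c * Real.exp (-(r * t))))) (Set.Ioi 0) :=
    h2.const_mul (r ^ c)⁻¹
  apply h3.congr_fun _ measurableSet_Ioi
  intro t ht
  have hrc : r ^ c ≠ 0 := (Real.rpow_pos_of_pos hr c).ne'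
  simp only []
  field_simp

lemma watson_aux_integral {c r : ℝ} (hc : -1 < c) (hr : 0 < r) :
    ∫ t in Set.Ioi 0, t ^ c * Real.exp (-(r * t)) = Real.Gamma (c + 1) * r ^ (-c - 1) := by
  have := Real.integral_rpow_mul_exp_neg_mul_Ioi (show 0 < c + 1 by linarith) hr
  simp only [add_sub_cancel_right] at this
  rw [this, one_div, Real.inv_rpow hr.le, ← Real.rpow_neg hr.le]
  rw [show -(c + 1) = -c - 1 by ring]
  ring

/-- Watson's lemma, one-term version.  Let `0 < T ≤ ∞` and `f : [0,T] → ℂ`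
measurable with `∫_0^T ‖f t‖ e^{-ℓ t} dt < ∞` for some `ℓ ≥ 0`.  Suppose
`f t = a t^b + O(t^{b'})` as `t → 0⁺` with `-1 < b < b'` and `a ≠ 0`.  Then
`∫_0^T f t e^{-λ t} dt = a Γ(b+1) λ^{-b-1} + O(λ^{-b'-1})` as `λ → +∞`. -/
theorem watson_lemma_one_term (T : ℝ≥0∞) (hT : 0 < T) (f : ℝ → ℂ)
    (S : Set ℝ) (hS : S = {t : ℝ | 0 < t ∧ ENNReal.ofReal t < T})
    (hmeas : Measurable f) (ℓ : ℝ) (hℓ : 0 ≤ ℓ)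
    (hint : IntegrableOn (fun t => ‖f t‖ * Real.exp (-ℓ * t)) S)
    (a : ℂ) (ha : a ≠ 0) (b b' : ℝ) (hb : -1 < b) (hbb' : b < b')
    (happrox : ∃ M δ : ℝ, 0 < M ∧ 0 < δ ∧ ∀ t : ℝ, 0 < t → t ≤ δ →
      ‖f t - a * (t : ℂ) ^ (b : ℂ)‖ ≤ M * t ^ b') :
    ∃ C Λ : ℝ, 0 < Λ ∧ ∀ lam : ℝ, Λ ≤ lam →
      ‖(∫ t in S, f t * Complex.exp (-(lam * t))) -
          a * Real.Gamma (b + 1) * (lam : ℂ) ^ ((-b - 1 : ℝ) : ℂ)‖ ≤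
        C * lam ^ (-b' - 1) := by
  obtain ⟨M, δ, hM, hδ, happ⟩ := happrox
  have hb' : -1 < b' := hb.trans hbb'
  -- choose δ₀
  obtain ⟨c, hc0, hcT⟩ := exists_between hT
  have hcfin : c ≠ ⊤ := (hcT.trans_le le_top).ne
  set δ₀ : ℝ := min δ c.toReal with hδ₀def
  have hδ₀ : 0 < δ₀ := lt_min hδ (ENNReal.toReal_pos hc0.ne' hcfin)
  have hδ₀δ : δ₀ ≤ δ := min_le_left _ _
  have hδ₀T : ENNReal.ofReal δ₀ < T := by
    refine lt_of_le_of_lt ?_ hcT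
    calc ENNReal.ofReal δ₀ ≤ ENNReal.ofReal c.toReal :=
          ENNReal.ofReal_le_ofReal (min_le_right _ _)
      _ = c := ENNReal.ofReal_toReal hcfin
  set I1 : Set ℝ := Set.Ioc 0 δ₀ with hI1def
  have hI1S : I1 ⊆ S := by
    rw [hS]
    intro t ht
    exact ⟨ht.1, lt_of_le_of_lt (ENNReal.ofReal_le_ofReal ht.2) hδ₀T⟩
  have hSsub : S ⊆ Set.Ioi 0 := by rw [hS]; exact fun t ht => ht.1
  have hmeasS : MeasurableSet S := by
    rw [hS]
    have : {t : ℝ | 0 < t ∧ ENNReal.ofReal t < T} =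
        Set.Ioi 0 ∩ ENNReal.ofReal ⁻¹' (Set.Iio T) := by
      ext t; simp [Set.mem_Ioi]
    rw [this]
    exact measurableSet_Ioi.inter (ENNReal.measurable_ofReal measurableSet_Iio)
  set K : ℝ := ∫ t in S, ‖f t‖ * Real.exp (-ℓ * t) with hKdef
  have hK0 : 0 ≤ K := by
    apply integral_nonneg
    intro t; positivity
  -- eventual smallness of exponential tail
  have hev : ∀ᶠ lam in atTop,
      (K * Real.exp (ℓ * δ₀)) * (lam ^ (b' + 1) * Real.exp (-δ₀ * lam)) < 1 := by
    have h := (tendsto_rpow_mul_exp_neg_mul_atTop_nhds_zero (b' + 1) δ₀ hδ₀).const_mul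
      (K * Real.exp (ℓ * δ₀))
    rw [mul_zero] at h
    exact h.eventually_lt_const one_pos
  obtain ⟨Λ₀, hΛ₀⟩ := eventually_atTop.mp hev
  refine ⟨M * Real.Gamma (b' + 1) + ‖a‖ * δ₀ ^ (b - b') * Real.Gamma (b' + 1) + 1,
    max Λ₀ (max 1 ℓ), lt_of_lt_of_le one_pos (le_max_of_le_right (le_max_left _ _)), ?_⟩
  intro lam hlam
  have hlam1 : (1 : ℝ) ≤ lam := le_trans (le_max_of_le_right (le_max_left _ _)) hlam
  have hlamℓ : ℓ ≤ lam := le_trans (le_max_of_le_right (le_max_right _ _)) hlam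
  have hlam0 : (0 : ℝ) < lam := lt_of_lt_of_le one_pos hlam1
  have hlamΛ₀ : Λ₀ ≤ lam := le_trans (le_max_left _ _) hlam
  -- notation
  set g : ℝ → ℂ := fun t => f t * Complex.exp (-(lam * t)) with hgdef
  set P : ℝ → ℂ := fun t => a * (t : ℂ) ^ (b : ℂ) * Complex.exp (-(lam * t)) with hPdef
  have hexp : ∀ t : ℝ, Complex.exp (-((lam : ℂ) * t)) = (Real.exp (-(lam * t)) : ℂ) := by
    intro t
    rw [← Complex.ofReal_mul, ← Complex.ofReal_neg, Complex.ofReal_exp]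
  have hnorm : ∀ t : ℝ, ∀ z : ℂ, ‖z * Complex.exp (-((lam : ℂ) * t))‖
      = ‖z‖ * Real.exp (-(lam * t)) := by
    intro t z
    rw [norm_mul, hexp t, Complex.norm_real, Real.norm_eq_abs, abs_of_pos (Real.exp_pos _)]
  -- pointwise identity for P on positive t
  have hPeq : ∀ t : ℝ, t ∈ Set.Ioi (0:ℝ) →
      a * ((t ^ b * Real.exp (-(lam * t)) : ℝ) : ℂ) = P t := by
    intro t ht
    rw [hPdef]
    simp only []
    rw [Complex.ofReal_mul, ← Complex.ofReal_cpow (le_of_lt ht), hexp t]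
    ring
  -- integrability of P on Ioi 0
  have hPreal : IntegrableOn (fun t : ℝ => t ^ b * Real.exp (-(lam * t))) (Set.Ioi 0) :=
    watson_aux_integrable hb hlam0
  have hPint : IntegrableOn P (Set.Ioi 0) := by
    have h1 : IntegrableOn (fun t : ℝ => a * ((t ^ b * Real.exp (-(lam * t)) : ℝ) : ℂ))
        (Set.Ioi 0) := (hPreal.ofReal.const_mul a)
    exact h1.congr_fun hPeq measurableSet_Ioi
  -- value of integral of P over Ioi 0
  have hPval : ∫ t in Set.Ioi 0, P t
      = a * Real.Gamma (b + 1) * (lam : ℂ) ^ ((-b - 1 : ℝ) : ℂ) := by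
    rw [← setIntegral_congr_fun measurableSet_Ioi hPeq]
    rw [integral_const_mul]
    have hOR : (∫ t in Set.Ioi (0:ℝ), ((t ^ b * Real.exp (-(lam * t)) : ℝ) : ℂ))
        = ((∫ t in Set.Ioi (0:ℝ), t ^ b * Real.exp (-(lam * t)) : ℝ) : ℂ) := integral_ofReal
    rw [hOR, watson_aux_integral hb hlam0]
    rw [← Complex.ofReal_cpow hlam0.le]
    push_cast
    ring
  -- integrability of g on S
  have hgmeas : AEStronglyMeasurable g (volume.restrict S) := by
    apply Measurable.aestronglyMeasurable
    apply hmeas.mul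
    exact Complex.measurable_exp.comp ((measurable_const.mul Complex.measurable_ofReal).neg)
  have hgint : IntegrableOn g S := by
    apply Integrable.mono' hint hgmeas
    rw [ae_restrict_iff' hmeasS]
    filter_upwards with t ht
    rw [hgdef]
    simp only []
    rw [hnorm t]
    have ht0 : 0 < t := hSsub ht
    have : Real.exp (-(lam * t)) ≤ Real.exp (-ℓ * t) := by
      apply Real.exp_le_exp.2
      nlinarith
    exact mul_le_mul_of_nonneg_left this (norm_nonneg _)
  -- split the domain S
  have hSunion : S = I1 ∪ (S \ I1) := (Set.union_diff_cancel hI1S).symm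
  have hsplitS : ∫ t in S, g t = (∫ t in I1, g t) + ∫ t in S \ I1, g t := by
    rw [← setIntegral_union (disjoint_sdiff_self_right) (hmeasS.diff measurableSet_Ioc)
      (hgint.mono_set hI1S) (hgint.mono_set Set.diff_subset), Set.union_diff_cancel hI1S]
  -- split Ioi 0
  have hsplitP : ∫ t in Set.Ioi 0, P t = (∫ t in I1, P t) + ∫ t in Set.Ioi δ₀, P t := by
    rw [← Set.Ioc_union_Ioi_eq_Ioi hδ₀.le]
    exact setIntegral_union (Set.Ioc_disjoint_Ioi le_rfl) measurableSet_Ioi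
      (hPint.mono_set (by rw [← Set.Ioc_union_Ioi_eq_Ioi hδ₀.le]; exact Set.subset_union_left))
      (hPint.mono_set (by rw [← Set.Ioc_union_Ioi_eq_Ioi hδ₀.le]; exact Set.subset_union_right))
  -- split off the main part on I1
  have hgI1 : IntegrableOn g I1 := hgint.mono_set hI1S
  have hPI1 : IntegrableOn P I1 := hPint.mono_set Set.Ioc_subset_Ioi_self
  have hsplit3 : ∫ t in I1, g t = (∫ t in I1, g t - P t) + ∫ t in I1, P t := by
    rw [integral_sub hgI1 hPI1]
    ring
  -- the key decomposition
  have hdecomp : (∫ t in S, g t) - a * Real.Gamma (b + 1) * (lam : ℂ) ^ ((-b - 1 : ℝ) : ℂ)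
      = (∫ t in I1, g t - P t) + (∫ t in S \ I1, g t) - ∫ t in Set.Ioi δ₀, P t := by
    rw [← hPval, hsplitS, hsplitP, hsplit3]
    ring
  rw [hdecomp]
  -- bound the three pieces
  have hb'real : IntegrableOn (fun t : ℝ => t ^ b' * Real.exp (-(lam * t))) (Set.Ioi 0) :=
    watson_aux_integrable hb' hlam0
  have hb'val : ∫ t in Set.Ioi 0, t ^ b' * Real.exp (-(lam * t))
      = Real.Gamma (b' + 1) * lam ^ (-b' - 1) := watson_aux_integral hb' hlam0
  -- piece 1
  have hN1 : ‖∫ t in I1, g t - P t‖ ≤ M * Real.Gamma (b' + 1) * lam ^ (-b' - 1) := by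
    have hbd : ∀ᵐ t ∂volume.restrict I1, ‖g t - P t‖
        ≤ M * (t ^ b' * Real.exp (-(lam * t))) := by
      rw [ae_restrict_iff' measurableSet_Ioc]
      filter_upwards with t ht
      have ht0 : 0 < t := ht.1
      have h1 : g t - P t = (f t - a * (t : ℂ) ^ (b : ℂ)) * Complex.exp (-((lam:ℂ) * t)) := by
        rw [hgdef, hPdef]; ring
      rw [h1, hnorm t]
      have h2 := happ t ht.1 (le_trans ht.2 hδ₀δ)
      calc ‖f t - a * (t : ℂ) ^ (b : ℂ)‖ * Real.exp (-(lam * t))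
          ≤ (M * t ^ b') * Real.exp (-(lam * t)) :=
            mul_le_mul_of_nonneg_right h2 (Real.exp_pos _).le
        _ = M * (t ^ b' * Real.exp (-(lam * t))) := by ring
    have hintbd : IntegrableOn (fun t : ℝ => M * (t ^ b' * Real.exp (-(lam * t)))) I1 :=
      IntegrableOn.mono_set (hb'real.const_mul M) Set.Ioc_subset_Ioi_self
    calc ‖∫ t in I1, g t - P t‖
        ≤ ∫ t in I1, M * (t ^ b' * Real.exp (-(lam * t))) :=
          norm_integral_le_of_norm_le hintbd hbd
      _ ≤ ∫ t in Set.Ioi 0, M * (t ^ b' * Real.exp (-(lam * t))) := by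
          apply setIntegral_mono_set (hb'real.const_mul M)
          · filter_upwards [ae_restrict_mem measurableSet_Ioi] with t ht
            exact mul_nonneg hM.le (mul_nonneg (Real.rpow_nonneg (le_of_lt ht) _)
              (Real.exp_pos _).le)
          · exact HasSubset.Subset.eventuallyLE Set.Ioc_subset_Ioi_self
      _ = M * Real.Gamma (b' + 1) * lam ^ (-b' - 1) := by
          rw [integral_const_mul, hb'val]; ring
  -- piece 3 : tail of P
  have hN3 : ‖∫ t in Set.Ioi δ₀, P t‖
      ≤ ‖a‖ * δ₀ ^ (b - b') * Real.Gamma (b' + 1) * lam ^ (-b' - 1) := by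
    have hbd : ∀ᵐ t ∂volume.restrict (Set.Ioi δ₀), ‖P t‖
        ≤ ‖a‖ * δ₀ ^ (b - b') * (t ^ b' * Real.exp (-(lam * t))) := by
      rw [ae_restrict_iff' measurableSet_Ioi]
      filter_upwards with t ht
      have ht0 : 0 < t := hδ₀.trans ht
      rw [hPdef]
      simp only []
      rw [hnorm t, norm_mul, ← Complex.ofReal_cpow ht0.le, Complex.norm_real,
        Real.norm_eq_abs, abs_of_pos (Real.rpow_pos_of_pos ht0 b)]
      have htb : t ^ b ≤ δ₀ ^ (b - b') * t ^ b' := by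
        have h1 : t ^ b = t ^ (b - b') * t ^ b' := by
          rw [← Real.rpow_add ht0]; ring_nf
        rw [h1]
        apply mul_le_mul_of_nonneg_right _ (Real.rpow_nonneg ht0.le _)
        exact Real.rpow_le_rpow_of_nonpos hδ₀ (le_of_lt ht) (by linarith)
      calc ‖a‖ * t ^ b * Real.exp (-(lam * t))
          ≤ ‖a‖ * (δ₀ ^ (b - b') * t ^ b') * Real.exp (-(lam * t)) := by
            apply mul_le_mul_of_nonneg_right _ (Real.exp_pos _).le
            exact mul_le_mul_of_nonneg_left htb (norm_nonneg a)
        _ = ‖a‖ * δ₀ ^ (b - b') * (t ^ b' * Real.exp (-(lam * t))) := by ring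
    have hintbd : IntegrableOn
        (fun t : ℝ => ‖a‖ * δ₀ ^ (b - b') * (t ^ b' * Real.exp (-(lam * t)))) (Set.Ioi δ₀) :=
      IntegrableOn.mono_set (hb'real.const_mul _) (Set.Ioi_subset_Ioi hδ₀.le)
    calc ‖∫ t in Set.Ioi δ₀, P t‖
        ≤ ∫ t in Set.Ioi δ₀, ‖a‖ * δ₀ ^ (b - b') * (t ^ b' * Real.exp (-(lam * t))) :=
          norm_integral_le_of_norm_le hintbd hbd
      _ ≤ ∫ t in Set.Ioi 0, ‖a‖ * δ₀ ^ (b - b') * (t ^ b' * Real.exp (-(lam * t))) := by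
          apply setIntegral_mono_set (hb'real.const_mul _)
          · filter_upwards [ae_restrict_mem measurableSet_Ioi] with t ht
            exact mul_nonneg (by positivity) (mul_nonneg (Real.rpow_nonneg (le_of_lt ht) _)
              (Real.exp_pos _).le)
          · exact HasSubset.Subset.eventuallyLE (Set.Ioi_subset_Ioi hδ₀.le)
      _ = ‖a‖ * δ₀ ^ (b - b') * Real.Gamma (b' + 1) * lam ^ (-b' - 1) := by
          rw [integral_const_mul, hb'val]; ring
  -- piece 2 : tail of f
  have hN2 : ‖∫ t in S \ I1, g t‖ ≤ lam ^ (-b' - 1) := by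
    set E : ℝ := Real.exp (ℓ * δ₀) * Real.exp (-δ₀ * lam) with hEdef
    have hE0 : 0 ≤ E := by positivity
    have hbd : ∀ᵐ t ∂volume.restrict (S \ I1), ‖g t‖
        ≤ E * (‖f t‖ * Real.exp (-ℓ * t)) := by
      rw [ae_restrict_iff' (hmeasS.diff measurableSet_Ioc)]
      filter_upwards with t ht
      have ht0 : 0 < t := hSsub ht.1
      have htδ : δ₀ < t := by
        by_contra h
        exact ht.2 ⟨ht0, not_lt.1 h⟩
      rw [hgdef]
      simp only []
      rw [hnorm t]
      have hexp2 : Real.exp (-(lam * t)) ≤ E * Real.exp (-ℓ * t) := by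
        rw [hEdef, ← Real.exp_add, ← Real.exp_add]
        apply Real.exp_le_exp.2
        nlinarith
      calc ‖f t‖ * Real.exp (-(lam * t)) ≤ ‖f t‖ * (E * Real.exp (-ℓ * t)) :=
            mul_le_mul_of_nonneg_left hexp2 (norm_nonneg _)
        _ = E * (‖f t‖ * Real.exp (-ℓ * t)) := by ring
    have hintbd : IntegrableOn (fun t : ℝ => E * (‖f t‖ * Real.exp (-ℓ * t))) (S \ I1) :=
      IntegrableOn.mono_set (hint.const_mul E) Set.diff_subset
    have hKE : E * K ≤ lam ^ (-b' - 1) := by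
      have h := hΛ₀ lam hlamΛ₀
      have hpow : (0:ℝ) < lam ^ (b' + 1) := Real.rpow_pos_of_pos hlam0 _
      have hlt : (K * Real.exp (ℓ * δ₀) * Real.exp (-δ₀ * lam)) * lam ^ (b' + 1) ≤ 1 := by
        nlinarith [Real.exp_pos (-δ₀ * lam), Real.exp_pos (ℓ * δ₀)]
      have h2 : E * K ≤ 1 / lam ^ (b' + 1) := by
        rw [le_div_iff₀ hpow]
        calc E * K * lam ^ (b' + 1)
            = (K * Real.exp (ℓ * δ₀) * Real.exp (-δ₀ * lam)) * lam ^ (b' + 1) := by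
              rw [hEdef]; ring
          _ ≤ 1 := hlt
      rw [show -b' - 1 = -(b' + 1) by ring, Real.rpow_neg hlam0.le, ← one_div]
      exact h2
    calc ‖∫ t in S \ I1, g t‖ ≤ ∫ t in S \ I1, E * (‖f t‖ * Real.exp (-ℓ * t)) :=
          norm_integral_le_of_norm_le hintbd hbd
      _ = E * ∫ t in S \ I1, ‖f t‖ * Real.exp (-ℓ * t) := integral_const_mul _ _
      _ ≤ E * K := by
          apply mul_le_mul_of_nonneg_left _ hE0
          apply setIntegral_mono_set hint
          · filter_upwards [ae_restrict_mem hmeasS] with t ht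
            positivity
          · exact HasSubset.Subset.eventuallyLE Set.diff_subset
      _ ≤ lam ^ (-b' - 1) := hKE
  -- combine
  calc ‖(∫ t in I1, g t - P t) + (∫ t in S \ I1, g t) - ∫ t in Set.Ioi δ₀, P t‖
      ≤ ‖(∫ t in I1, g t - P t) + (∫ t in S \ I1, g t)‖ + ‖∫ t in Set.Ioi δ₀, P t‖ :=
        norm_sub_le _ _
    _ ≤ ‖∫ t in I1, g t - P t‖ + ‖∫ t in S \ I1, g t‖ + ‖∫ t in Set.Ioi δ₀, P t‖ :=
        add_le_add_left (norm_add_le _ _) _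
    _ ≤ M * Real.Gamma (b' + 1) * lam ^ (-b' - 1) + lam ^ (-b' - 1)
        + ‖a‖ * δ₀ ^ (b - b') * Real.Gamma (b' + 1) * lam ^ (-b' - 1) := by
        gcongr
    _ = (M * Real.Gamma (b' + 1) + ‖a‖ * δ₀ ^ (b - b') * Real.Gamma (b' + 1) + 1)
        * lam ^ (-b' - 1) := by ring
end

section
/- (Laplace's method, boundary maximum) Fix -∞ < a < b ≤ ∞ and let f : [a,b] → ℝ and g : [a,b] → ℝ be measurable with ∫_a^b |f(t)| e^{ℓ g(t)} dt < ∞ for some ℓ ≥ 0. Suppose g is differentiable at a with g'(a) < 0; suppose for every δ > 0 there exists η(δ) > 0 with g(t) < g(a) - η(δ) for all t ∈ (a+δ, b); and suppose f(t) ~ (t-a)^p as t → a⁺ with p > -1. Then ∫_a^b f(t) e^{λ g(t)} dt ~ Γ(p+1) (-g'(a) λ)^{-(p+1)} e^{g(a)λ} as λ → +∞. -/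
open MeasureTheory Filter

/-- Affine substitution in a set integral. -/
lemma laplace_aux_subst (h : ℝ → ℝ) {lam δ₀ : ℝ} (a : ℝ) (hlam : 0 < lam) :
    ∫ t in Set.Ioc a (a + δ₀), h t
      = lam⁻¹ * ∫ s in Set.Ioc 0 (lam * δ₀), h (a + s / lam) := by
  rw [← MeasureTheory.integral_indicator measurableSet_Ioc,
    ← MeasureTheory.integral_indicator measurableSet_Ioc]
  have key : ∀ x : ℝ, Set.indicator (Set.Ioc 0 (lam * δ₀)) (fun s => h (a + s / lam)) x
      = (fun y => Set.indicator (Set.Ioc a (a + δ₀)) h (a + y)) (x * lam⁻¹) := by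
    intro x
    simp only [Set.indicator_apply, Set.mem_Ioc, div_eq_mul_inv]
    have hiff : (0 < x ∧ x ≤ lam * δ₀) ↔ (a < a + x * lam⁻¹ ∧ a + x * lam⁻¹ ≤ a + δ₀) := by
      rw [lt_add_iff_pos_right, add_le_add_iff_left, ← div_eq_mul_inv,
        lt_div_iff₀ hlam, div_le_iff₀ hlam, zero_mul, mul_comm lam δ₀]
    rw [if_congr hiff rfl rfl]
  rw [funext key, MeasureTheory.Measure.integral_comp_inv_mul_right
      (fun y => Set.indicator (Set.Ioc a (a + δ₀)) h (a + y)) lam,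
    MeasureTheory.integral_add_left_eq_self
      (Set.indicator (Set.Ioc a (a + δ₀)) h) a, smul_eq_mul, ← mul_assoc,
    abs_of_pos hlam, inv_mul_cancel₀ hlam.ne', one_mul]

/-- Laplace's method for a simple maximum at the left endpoint.  Fix
`-∞ < a < b ≤ ∞`, and measurable `f g : [a,b] → ℝ` with
`∫_a^b |f t| e^{ℓ g t} dt < ∞` for some `ℓ ≥ 0`.  Suppose `g` is
differentiable (from the right) at `a` with `g'(a) < 0`; that for every
`δ > 0` there is `η > 0` with `g t < g a - η` on `(a+δ, b)`; and that
`f t ∼ (t-a)^p` as `t → a⁺` with `p > -1`.  Then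
`∫_a^b f t e^{λ g t} dt ∼ Γ(p+1) (-g'(a) λ)^{-(p+1)} e^{g(a) λ}`
as `λ → +∞`. -/
theorem laplace_boundary_maximum (a : ℝ) (b : EReal) (hab : (a : EReal) < b)
    (S : Set ℝ) (hS : S = {t : ℝ | a ≤ t ∧ (t : EReal) < b})
    (f g : ℝ → ℝ) (hf : Measurable f) (hg : Measurable g)
    (ℓ : ℝ) (hℓ : 0 ≤ ℓ)
    (hint : IntegrableOn (fun t => |f t| * Real.exp (ℓ * g t)) S)
    (g' : ℝ) (hderiv : HasDerivWithinAt g g' (Set.Ici a) a) (hg' : g' < 0)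
    (hη : ∀ δ > 0, ∃ η > 0, ∀ t ∈ S, a + δ < t → g t < g a - η)
    (p : ℝ) (hp : -1 < p)
    (hfp : Tendsto (fun t => f t / (t - a) ^ p) (nhdsWithin a (Set.Ioi a)) (nhds 1)) :
    Tendsto (fun lam : ℝ =>
        (∫ t in S, f t * Real.exp (lam * g t)) /
          (Real.Gamma (p + 1) * (-g' * lam) ^ (-(p + 1)) * Real.exp (g a * lam)))
      atTop (nhds 1) := by
  have hc : (0:ℝ) < -g' := by linarith
  set c : ℝ := -g' with hcdef
  have hp1 : (0:ℝ) < p + 1 := by linarith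
  have hΓ : 0 < Real.Gamma (p + 1) := Real.Gamma_pos_of_pos hp1
  -- S is measurable
  have hSm : MeasurableSet S := by
    rw [hS]
    exact measurableSet_Ici.inter (measurable_coe_real_ereal measurableSet_Iio)
  -- a real point between a and b
  obtain ⟨r, har, hrb⟩ := EReal.lt_iff_exists_real_btwn.mp hab
  have har' : a < r := by exact_mod_cast har
  -- the slope of g tends to g' from the right
  have hsl : Tendsto (slope g a) (nhdsWithin a (Set.Ioi a)) (nhds g') := by
    have := hasDerivWithinAt_iff_tendsto_slope.mp hderiv
    rwa [Set.Ici_sdiff_left] at this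
  -- choose δ₀
  have hkey : ∃ δ₀ > 0, a + δ₀ ≤ r ∧ ∀ t ∈ Set.Ioc a (a + δ₀),
      (g t - g a ≤ -(c/2) * (t - a)) ∧ 0 < f t ∧ f t ≤ 2 * (t - a) ^ p := by
    have h1 : ∀ᶠ t in nhdsWithin a (Set.Ioi a), slope g a t < g' / 2 :=
      hsl.eventually_lt_const (by linarith)
    have h2 : ∀ᶠ t in nhdsWithin a (Set.Ioi a), f t / (t - a) ^ p < 2 :=
      hfp.eventually_lt_const (by norm_num)
    have h3 : ∀ᶠ t in nhdsWithin a (Set.Ioi a), (1/2 : ℝ) < f t / (t - a) ^ p :=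
      hfp.eventually_const_lt (by norm_num)
    have h4 := (h1.and (h2.and h3))
    rw [eventually_nhdsWithin_iff, Metric.eventually_nhds_iff] at h4
    obtain ⟨ε, hε, hball⟩ := h4
    refine ⟨min (ε/2) (r - a), lt_min (by positivity) (by linarith), by linarith [min_le_right (ε/2) (r - a)], ?_⟩
    intro t ht
    have hta : 0 < t - a := by linarith [ht.1]
    have htb : t - a ≤ min (ε/2) (r - a) := by linarith [ht.2]
    have hdist : dist t a < ε := by
      rw [Real.dist_eq, abs_of_pos hta]
      have := min_le_left (ε/2) (r - a); linarith
    obtain ⟨hb1, hb2, hb3⟩ := hball hdist ht.1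
    have hpow : (0:ℝ) < (t - a) ^ p := Real.rpow_pos_of_pos hta p
    refine ⟨?_, ?_, ?_⟩
    · rw [slope_def_field] at hb1
      have := (div_lt_iff₀ hta).mp hb1
      have hcg : g' / 2 = -(c/2) := by rw [hcdef]; ring
      nlinarith
    · have := (lt_div_iff₀ hpow).mp hb3
      nlinarith
    · have := (div_lt_iff₀ hpow).mp hb2
      linarith
  obtain ⟨δ₀, hδ₀, hδ₀r, hδ₀key⟩ := hkey
  -- the interval near a is inside S
  have hIocS : Set.Ioc a (a + δ₀) ⊆ S := by
    intro t ht
    rw [hS]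
    refine ⟨ht.1.le, lt_of_le_of_lt ?_ hrb⟩
    exact_mod_cast (by linarith [ht.2] : t ≤ r)
  obtain ⟨η, hη0, hηbd⟩ := hη δ₀ hδ₀
  -- g is bounded by g a on S
  have hgle : ∀ t ∈ S, g t ≤ g a := by
    intro t ht
    have hta : a ≤ t := by rw [hS] at ht; exact ht.1
    rcases eq_or_lt_of_le hta with h | h
    · simp [← h]
    rcases le_or_gt t (a + δ₀) with h2 | h2
    · have := (hδ₀key t ⟨h, h2⟩).1
      nlinarith
    · have := hηbd t ht h2; linarith
  -- integrability for each lam ≥ ℓ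
  have hIntLam : ∀ lam : ℝ, ℓ ≤ lam →
      IntegrableOn (fun t => f t * Real.exp (lam * g t)) S := by
    intro lam hlam
    have hb : IntegrableOn
        (fun t => |f t| * Real.exp (ℓ * g t) * Real.exp ((lam - ℓ) * g a)) S :=
      hint.mul_const _
    refine MeasureTheory.Integrable.mono hb ?_ ?_
    · exact ((hf.mul ((measurable_const.mul hg).exp)).aestronglyMeasurable).restrict
    · filter_upwards [ae_restrict_mem hSm] with t ht
      rw [Real.norm_eq_abs, Real.norm_eq_abs, abs_mul, abs_of_pos (Real.exp_pos _),
        abs_of_nonneg (by positivity : (0:ℝ) ≤ |f t| * Real.exp (ℓ * g t) * Real.exp ((lam - ℓ) * g a))]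
      have : Real.exp (lam * g t) ≤ Real.exp (ℓ * g t) * Real.exp ((lam - ℓ) * g a) := by
        rw [← Real.exp_add, Real.exp_le_exp]
        have := hgle t ht
        nlinarith
      calc |f t| * Real.exp (lam * g t)
          ≤ |f t| * (Real.exp (ℓ * g t) * Real.exp ((lam - ℓ) * g a)) := by
            exact mul_le_mul_of_nonneg_left this (abs_nonneg _)
        _ = |f t| * Real.exp (ℓ * g t) * Real.exp ((lam - ℓ) * g a) := by ring
  -- the tail set
  set T : Set ℝ := S ∩ Set.Ioi (a + δ₀) with hTdef
  have hTm : MeasurableSet T := hSm.inter measurableSet_Ioi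
  have hTS : T ⊆ S := Set.inter_subset_left
  have hsplit : ∀ lam : ℝ, ℓ ≤ lam →
      (∫ t in S, f t * Real.exp (lam * g t))
        = (∫ t in Set.Ioc a (a + δ₀), f t * Real.exp (lam * g t))
          + ∫ t in T, f t * Real.exp (lam * g t) := by
    intro lam hlam
    have hsub : Set.Ioc a (a + δ₀) ∪ T ⊆ S := Set.union_subset hIocS hTS
    have hae : S =ᵐ[volume] ((Set.Ioc a (a + δ₀) ∪ T : Set ℝ)) := by
      rw [MeasureTheory.ae_eq_set]
      constructor
      · refine measure_mono_null ?_ (measure_singleton a)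
        rintro t ⟨htS, htn⟩
        have htS' := htS
        rw [hS] at htS'
        simp only [Set.mem_union, Set.mem_Ioc, hTdef, Set.mem_inter_iff, Set.mem_Ioi] at htn
        push_neg at htn
        rcases eq_or_lt_of_le htS'.1 with h | h
        · exact Set.mem_singleton_iff.mpr h.symm
        · exfalso
          rcases le_or_gt t (a + δ₀) with h2 | h2
          · exact (htn.1 h).not_gt (lt_of_le_of_ne h2 (fun hh => (htn.1 h).not_ge hh.le))
          · exact (htn.2 htS).not_gt h2
      · rw [Set.diff_eq_empty.mpr hsub]; simp
    rw [MeasureTheory.setIntegral_congr_set hae]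
    refine MeasureTheory.setIntegral_union ?_ hTm ?_ ?_
    · rw [Set.disjoint_left]
      intro t ht ht'
      exact absurd ht'.2 (not_lt.mpr ht.2)
    · exact (hIntLam lam hlam).mono_set hIocS
    · exact (hIntLam lam hlam).mono_set hTS
  -- the tail is negligible
  set M : ℝ := ∫ t in S, |f t| * Real.exp (ℓ * g t) with hMdef
  have hTail : Tendsto (fun lam : ℝ => (c * lam) ^ (p + 1) * Real.exp (-(g a * lam)) *
      ∫ t in T, f t * Real.exp (lam * g t)) atTop (nhds 0) := by
    have hB : Tendsto (fun lam : ℝ =>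
        (M * Real.exp (-ℓ * (g a - η)) * c ^ (p + 1)) * (lam ^ (p + 1) * Real.exp (-η * lam)))
        atTop (nhds 0) := by
      have := (tendsto_rpow_mul_exp_neg_mul_atTop_nhds_zero (p + 1) η hη0).const_mul
        (M * Real.exp (-ℓ * (g a - η)) * c ^ (p + 1))
      simpa using this
    refine squeeze_zero_norm' ?_ hB
    filter_upwards [eventually_ge_atTop ℓ, eventually_gt_atTop 0] with lam hlam hlam0
    have hX0 : (0:ℝ) ≤ (c * lam) ^ (p + 1) * Real.exp (-(g a * lam)) := by positivity
    have hI : ‖∫ t in T, f t * Real.exp (lam * g t)‖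
        ≤ M * Real.exp ((lam - ℓ) * (g a - η)) := by
      have int1 : IntegrableOn (fun t => f t * Real.exp (lam * g t)) T :=
        (hIntLam lam hlam).mono_set hTS
      have int2 : IntegrableOn
          (fun t => |f t| * Real.exp (ℓ * g t) * Real.exp ((lam - ℓ) * (g a - η))) T :=
        (hint.mono_set hTS).mul_const _
      calc ‖∫ t in T, f t * Real.exp (lam * g t)‖
          ≤ ∫ t in T, ‖f t * Real.exp (lam * g t)‖ :=
            MeasureTheory.norm_integral_le_integral_norm _
        _ ≤ ∫ t in T, |f t| * Real.exp (ℓ * g t) * Real.exp ((lam - ℓ) * (g a - η)) := by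
            refine MeasureTheory.setIntegral_mono_on int1.norm int2 hTm ?_
            intro t ht
            rw [Real.norm_eq_abs, abs_mul, abs_of_pos (Real.exp_pos _)]
            have h5 : Real.exp (lam * g t) ≤
                Real.exp (ℓ * g t) * Real.exp ((lam - ℓ) * (g a - η)) := by
              rw [← Real.exp_add, Real.exp_le_exp]
              nlinarith [hηbd t ht.1 ht.2]
            calc |f t| * Real.exp (lam * g t)
                ≤ |f t| * (Real.exp (ℓ * g t) * Real.exp ((lam - ℓ) * (g a - η))) :=
                  mul_le_mul_of_nonneg_left h5 (abs_nonneg _)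
              _ = |f t| * Real.exp (ℓ * g t) * Real.exp ((lam - ℓ) * (g a - η)) := by ring
        _ = (∫ t in T, |f t| * Real.exp (ℓ * g t)) * Real.exp ((lam - ℓ) * (g a - η)) :=
            MeasureTheory.integral_mul_const _ _
        _ ≤ M * Real.exp ((lam - ℓ) * (g a - η)) := by
            refine mul_le_mul_of_nonneg_right ?_ (Real.exp_pos _).le
            exact MeasureTheory.setIntegral_mono_set hint
              (Filter.Eventually.of_forall (fun t => by positivity))
              (HasSubset.Subset.eventuallyLE hTS)
    calc ‖(c * lam) ^ (p + 1) * Real.exp (-(g a * lam)) *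
          ∫ t in T, f t * Real.exp (lam * g t)‖
        = (c * lam) ^ (p + 1) * Real.exp (-(g a * lam)) *
          ‖∫ t in T, f t * Real.exp (lam * g t)‖ := by
          rw [norm_mul, Real.norm_eq_abs ((c * lam) ^ (p + 1) * Real.exp (-(g a * lam))),
            abs_of_nonneg hX0]
      _ ≤ (c * lam) ^ (p + 1) * Real.exp (-(g a * lam)) *
          (M * Real.exp ((lam - ℓ) * (g a - η))) := mul_le_mul_of_nonneg_left hI hX0
      _ = (M * Real.exp (-ℓ * (g a - η)) * c ^ (p + 1)) *
          (lam ^ (p + 1) * Real.exp (-η * lam)) := by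
          rw [Real.mul_rpow hc.le hlam0.le]
          have e1 : Real.exp (-(g a * lam)) * Real.exp ((lam - ℓ) * (g a - η))
              = Real.exp (-η * lam) * Real.exp (-ℓ * (g a - η)) := by
            rw [← Real.exp_add, ← Real.exp_add]; congr 1; ring
          linear_combination (c ^ (p + 1) * lam ^ (p + 1) * M) * e1
  -- the main part
  set F : ℝ → ℝ → ℝ := fun lam => Set.indicator (Set.Ioc 0 (lam * δ₀))
    (fun s => lam ^ p * (f (a + s / lam) * Real.exp (lam * (g (a + s / lam) - g a)))) with hFdef
  set L : ℝ → ℝ := Set.indicator (Set.Ioi 0)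
    (fun s => s ^ p * Real.exp (-(c * s))) with hLdef
  set G : ℝ → ℝ := Set.indicator (Set.Ioi 0)
    (fun s => 2 * (s ^ p * Real.exp (-(c / 2) * s))) with hGdef
  have hDCT : Tendsto (fun lam => ∫ s, F lam s) atTop (nhds (∫ s, L s)) := by
    refine MeasureTheory.tendsto_integral_filter_of_dominated_convergence G ?_ ?_ ?_ ?_
    · refine Filter.Eventually.of_forall (fun lam => ?_)
      have hm : Measurable fun s : ℝ => a + s / lam := by fun_prop
      exact ((measurable_const.mul ((hf.comp hm).mul
        ((measurable_const.mul ((hg.comp hm).sub measurable_const)).exp))).indicator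
        measurableSet_Ioc).aestronglyMeasurable
    · filter_upwards [eventually_gt_atTop 0] with lam hlam
      refine Filter.Eventually.of_forall (fun s => ?_)
      by_cases hs : s ∈ Set.Ioc 0 (lam * δ₀)
      · have hs0 : 0 < s := hs.1
        have hu0 : 0 < s / lam := div_pos hs0 hlam
        have huδ : s / lam ≤ δ₀ := (div_le_iff₀ hlam).mpr (by linarith [hs.2])
        obtain ⟨hg1, hf1, hf2⟩ := hδ₀key (a + s / lam) ⟨by linarith, by linarith⟩
        simp only [hFdef, hGdef]
        rw [Set.indicator_of_mem hs, Set.indicator_of_mem (Set.mem_Ioi.mpr hs0)]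
        rw [add_sub_cancel_left] at hg1 hf2
        have hgexp : Real.exp (lam * (g (a + s / lam) - g a)) ≤ Real.exp (-(c / 2) * s) := by
          rw [Real.exp_le_exp]
          have h6 : lam * (g (a + s / lam) - g a) ≤ lam * (-(c / 2) * (s / lam)) :=
            mul_le_mul_of_nonneg_left hg1 hlam.le
          have h7 : lam * (-(c / 2) * (s / lam)) = -(c / 2) * s := by
            field_simp
          linarith
        have hfb : |f (a + s / lam)| ≤ 2 * (s / lam) ^ p := by
          rw [abs_of_pos hf1]; exact hf2
        have hnorm : ‖lam ^ p * (f (a + s / lam) * Real.exp (lam * (g (a + s / lam) - g a)))‖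
            = lam ^ p * (|f (a + s / lam)| * Real.exp (lam * (g (a + s / lam) - g a))) := by
          rw [Real.norm_eq_abs, abs_mul, abs_mul, abs_of_pos (Real.exp_pos _),
            abs_of_nonneg (Real.rpow_nonneg hlam.le p)]
        rw [hnorm]
        have hcombine : lam ^ p * (2 * (s / lam) ^ p) = 2 * s ^ p := by
          rw [Real.div_rpow hs0.le hlam.le]
          have hlp : (0:ℝ) < lam ^ p := Real.rpow_pos_of_pos hlam p
          field_simp
        calc lam ^ p * (|f (a + s / lam)| * Real.exp (lam * (g (a + s / lam) - g a)))
            ≤ lam ^ p * ((2 * (s / lam) ^ p) * Real.exp (-(c / 2) * s)) := by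
              refine mul_le_mul_of_nonneg_left ?_ (Real.rpow_nonneg hlam.le p)
              exact mul_le_mul hfb hgexp (Real.exp_pos _).le (by positivity)
          _ = 2 * (s ^ p * Real.exp (-(c / 2) * s)) := by
              rw [← mul_assoc, hcombine, mul_assoc]
      · simp only [hFdef]
        rw [Set.indicator_of_notMem hs, norm_zero]
        exact Set.indicator_nonneg (fun x hx => by have : (0:ℝ) < x := hx; positivity) s
    · rw [hGdef, MeasureTheory.integrable_indicator_iff measurableSet_Ioi]
      have hic := integrableOn_rpow_mul_exp_neg_mul_rpow hp (zero_lt_one : (0:ℝ) < 1)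
        (by positivity : (0:ℝ) < c / 2)
      simp only [Real.rpow_one] at hic
      exact hic.const_mul 2
    · refine Filter.Eventually.of_forall (fun s => ?_)
      by_cases hs0 : 0 < s
      · have hLs : L s = s ^ p * Real.exp (-(c * s)) :=
          Set.indicator_of_mem (Set.mem_Ioi.mpr hs0) _
        rw [hLs]
        have hcomp : Tendsto (fun lam : ℝ => a + s / lam) atTop (nhdsWithin a (Set.Ioi a)) := by
          rw [tendsto_nhdsWithin_iff]
          constructor
          · have h8 : Tendsto (fun lam : ℝ => s / lam) atTop (nhds 0) :=
              tendsto_const_nhds.div_atTop tendsto_id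
            simpa using tendsto_const_nhds.add h8
          · filter_upwards [eventually_gt_atTop 0] with lam hlam
            simp only [Set.mem_Ioi]
            have : 0 < s / lam := div_pos hs0 hlam
            linarith
        have Hf : Tendsto (fun lam : ℝ => lam ^ p * f (a + s / lam)) atTop (nhds (s ^ p)) := by
          have H1 := hfp.comp hcomp
          have H1' := H1.const_mul (s ^ p)
          rw [mul_one] at H1'
          refine H1'.congr' ?_
          filter_upwards [eventually_gt_atTop 0] with lam hlam
          simp only [Function.comp]
          rw [add_sub_cancel_left, Real.div_rpow hs0.le hlam.le]
          have hsp : (0:ℝ) < s ^ p := Real.rpow_pos_of_pos hs0 p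
          have hlp : (0:ℝ) < lam ^ p := Real.rpow_pos_of_pos hlam p
          field_simp
        have He : Tendsto (fun lam : ℝ => Real.exp (lam * (g (a + s / lam) - g a))) atTop
            (nhds (Real.exp (-(c * s)))) := by
          have H2 := hsl.comp hcomp
          have H2' := H2.const_mul s
          have H2'' : Tendsto (fun lam : ℝ => lam * (g (a + s / lam) - g a)) atTop
              (nhds (s * g')) := by
            refine H2'.congr' ?_
            filter_upwards [eventually_gt_atTop 0] with lam hlam
            simp only [Function.comp]
            rw [slope_def_field, add_sub_cancel_left]
            field_simp
          have hval : s * g' = -(c * s) := by rw [hcdef]; ring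
          rw [hval] at H2''
          exact (Real.continuous_exp.tendsto _).comp H2''
        refine Tendsto.congr' ?_ (Hf.mul He)
        filter_upwards [eventually_ge_atTop (s / δ₀), eventually_gt_atTop 0] with lam hlam1 hlam0
        have hmem : s ∈ Set.Ioc 0 (lam * δ₀) := by
          refine ⟨hs0, ?_⟩
          rw [div_le_iff₀ hδ₀] at hlam1
          linarith
        simp only [hFdef]
        rw [Set.indicator_of_mem hmem]
        ring
      · have hL0 : L s = 0 := Set.indicator_of_notMem (by simpa using hs0) _
        rw [hL0]
        refine Tendsto.congr (fun lam => ?_) tendsto_const_nhds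
        exact (Set.indicator_of_notMem (fun hmem => hs0 hmem.1) _).symm
  have hLval : ∫ s, L s = (1 / c) ^ (p + 1) * Real.Gamma (p + 1) := by
    rw [hLdef, MeasureTheory.integral_indicator measurableSet_Ioi]
    have hiv := Real.integral_rpow_mul_exp_neg_mul_Ioi hp1 hc
    simp only [add_sub_cancel_right] at hiv
    exact hiv
  have hMain : Tendsto (fun lam : ℝ => (c * lam) ^ (p + 1) * Real.exp (-(g a * lam)) *
      ∫ t in Set.Ioc a (a + δ₀), f t * Real.exp (lam * g t)) atTop
      (nhds (Real.Gamma (p + 1))) := by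
    have hlim2 : Tendsto (fun lam => c ^ (p + 1) * ∫ s, F lam s) atTop
        (nhds (Real.Gamma (p + 1))) := by
      have h9 := hDCT.const_mul (c ^ (p + 1))
      rw [hLval] at h9
      have hval2 : c ^ (p + 1) * ((1 / c) ^ (p + 1) * Real.Gamma (p + 1))
          = Real.Gamma (p + 1) := by
        rw [Real.div_rpow zero_le_one hc.le, Real.one_rpow]
        have : (0:ℝ) < c ^ (p + 1) := Real.rpow_pos_of_pos hc _
        field_simp
      rwa [hval2] at h9
    refine Tendsto.congr' ?_ hlim2
    filter_upwards [eventually_gt_atTop 0] with lam hlam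
    have h1 : Real.exp (-(g a * lam)) * ∫ t in Set.Ioc a (a + δ₀), f t * Real.exp (lam * g t)
        = ∫ t in Set.Ioc a (a + δ₀), f t * Real.exp (lam * (g t - g a)) := by
      rw [← MeasureTheory.integral_const_mul]
      refine MeasureTheory.setIntegral_congr_fun measurableSet_Ioc (fun t _ => ?_)
      rw [mul_left_comm, ← Real.exp_add]
      congr 2
      ring
    have h2 := laplace_aux_subst (δ₀ := δ₀) (fun t => f t * Real.exp (lam * (g t - g a))) a hlam
    have h3 : (c * lam) ^ (p + 1) * lam⁻¹ = c ^ (p + 1) * lam ^ p := by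
      rw [Real.mul_rpow hc.le hlam.le, Real.rpow_add_one hlam.ne' p]
      field_simp
    calc c ^ (p + 1) * ∫ s, F lam s
        = c ^ (p + 1) * ∫ s in Set.Ioc 0 (lam * δ₀),
            lam ^ p * (f (a + s / lam) * Real.exp (lam * (g (a + s / lam) - g a))) := by
          simp only [hFdef]
          rw [MeasureTheory.integral_indicator measurableSet_Ioc]
      _ = c ^ (p + 1) * (lam ^ p * ∫ s in Set.Ioc 0 (lam * δ₀),
            f (a + s / lam) * Real.exp (lam * (g (a + s / lam) - g a))) := by
          rw [MeasureTheory.integral_const_mul]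
      _ = (c * lam) ^ (p + 1) * lam⁻¹ * ∫ s in Set.Ioc 0 (lam * δ₀),
            f (a + s / lam) * Real.exp (lam * (g (a + s / lam) - g a)) := by
          rw [h3, mul_assoc]
      _ = (c * lam) ^ (p + 1) * ∫ t in Set.Ioc a (a + δ₀),
            f t * Real.exp (lam * (g t - g a)) := by
          rw [h2, ← mul_assoc]
      _ = (c * lam) ^ (p + 1) * Real.exp (-(g a * lam)) *
            ∫ t in Set.Ioc a (a + δ₀), f t * Real.exp (lam * g t) := by
          rw [mul_assoc, h1]
  -- combine the two parts
  have hA : Tendsto (fun lam : ℝ => (c * lam) ^ (p + 1) * Real.exp (-(g a * lam)) *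
      ∫ t in S, f t * Real.exp (lam * g t)) atTop (nhds (Real.Gamma (p + 1))) := by
    have hsum := hMain.add hTail
    rw [add_zero] at hsum
    refine Tendsto.congr' ?_ hsum
    filter_upwards [eventually_ge_atTop ℓ] with lam hlam
    rw [hsplit lam hlam]
    ring
  have hfinal := hA.div_const (Real.Gamma (p + 1))
  rw [div_self hΓ.ne'] at hfinal
  refine Tendsto.congr' ?_ hfinal
  filter_upwards [eventually_gt_atTop 0] with lam hlam
  have hcl : (0:ℝ) < c * lam := mul_pos hc hlam
  have hR : (0:ℝ) < (c * lam) ^ (p + 1) := Real.rpow_pos_of_pos hcl _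
  rw [Real.rpow_neg hcl.le, Real.exp_neg]
  field_simp
end

section
/- (Erdélyi-type logarithmic Watson lemma, leading term) For 0 < δ < 1, real a > 0, and real b, ∫_0^δ (-log t)^b t^{a-1} e^{-λ t} dt = λ^{-a} (log λ)^b [Γ(a) + O(1/log λ)] as λ → +∞. -/
open MeasureTheory
open Real Set Filter

lemma rpow_mvt_aux {x y bb : ℝ} (hx : 0 < x) (hxy : x < y) :
    |x ^ bb - y ^ bb| ≤ |bb| * max (x ^ (bb - 1)) (y ^ (bb - 1)) * |x - y| := by
  obtain ⟨c, hc, hc'⟩ := exists_hasDerivAt_eq_slope (fun t => t ^ bb)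
    (fun t => bb * t ^ (bb - 1)) hxy
    (fun t ht => (Real.continuousAt_rpow_const t bb
        (Or.inl (lt_of_lt_of_le hx ht.1).ne')).continuousWithinAt)
    (fun t ht => Real.hasDerivAt_rpow_const (Or.inl (hx.trans ht.1).ne'))
  have hcx : 0 < c := hx.trans hc.1

  have heq : y ^ bb - x ^ bb = bb * c ^ (bb - 1) * (y - x) := by
    rw [hc', div_mul_cancel₀]
    exact sub_ne_zero.mpr (hxy.ne')
  have h1 : |x ^ bb - y ^ bb| = |bb| * c ^ (bb - 1) * |x - y| := by
    rw [abs_sub_comm, heq, abs_mul, abs_mul, abs_of_pos (rpow_pos_of_pos hcx _),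
      abs_sub_comm]
  rw [h1]
  have h2 : c ^ (bb - 1) ≤ max (x ^ (bb - 1)) (y ^ (bb - 1)) := by
    rcases le_or_gt 0 (bb - 1) with h | h
    · exact le_max_of_le_right (rpow_le_rpow hcx.le hc.2.le h)
    · exact le_max_of_le_left (rpow_le_rpow_of_nonpos hx hc.1.le h.le)
  gcongr

lemma rpow_mvt {x y bb : ℝ} (hx : 0 < x) (hy : 0 < y) :
    |x ^ bb - y ^ bb| ≤ |bb| * max (x ^ (bb - 1)) (y ^ (bb - 1)) * |x - y| := by
  rcases lt_trichotomy x y with h | h | h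
  · exact rpow_mvt_aux hx h
  · simp [h]
  · rw [abs_sub_comm (x ^ bb), abs_sub_comm x y, max_comm]
    exact rpow_mvt_aux hy h

lemma contOn_kM (a β : ℝ) :
    ContinuousOn (fun s : ℝ => (1 + |Real.log s|) ^ β * s ^ (a - 1) * Real.exp (-s))
      (Set.Ioi 0) := by
  have hlog : ContinuousOn Real.log (Ioi 0) :=
    Real.continuousOn_log.mono (fun x hx => by simp [ne_of_gt (mem_Ioi.mp hx)])
  have h1 : ContinuousOn (fun s : ℝ => 1 + |Real.log s|) (Ioi 0) :=
    continuousOn_const.add hlog.abs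
  have h2 : ContinuousOn (fun s : ℝ => (1 + |Real.log s|) ^ β) (Ioi 0) :=
    h1.rpow_const (fun x _ => Or.inl (by positivity))
  have h3 : ContinuousOn (fun s : ℝ => s ^ (a - 1)) (Ioi 0) :=
    continuousOn_id.rpow_const (fun x hx => Or.inl (ne_of_gt (mem_Ioi.mp hx)))
  exact (h2.mul h3).mul (continuous_neg.rexp.continuousOn)

lemma integrableOn_kM {a β : ℝ} (ha : 0 < a) (hβ : 0 ≤ β) :
    IntegrableOn (fun s : ℝ => (1 + |Real.log s|) ^ β * s ^ (a - 1) * Real.exp (-s))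
      (Set.Ioi 0) := by
  have hcont := contOn_kM a β
  rw [show (Ioi (0:ℝ)) = Ioc 0 1 ∪ Ioi 1 from (Ioc_union_Ioi_eq_Ioi zero_le_one).symm,
    integrableOn_union]
  constructor
  · -- near zero: dominate by (1+1/ε)^β * s ^ (a - 1 - ε*β)
    set ε : ℝ := a / (2 * (β + 1)) with hε
    have hε0 : 0 < ε := by positivity
    have hεβ : ε * β < a := by
      rw [hε, div_mul_eq_mul_div, div_lt_iff₀ (by positivity)]
      nlinarith [mul_nonneg ha.le hβ]
    have hint : IntegrableOn (fun s : ℝ => (1 + 1/ε) ^ β * s ^ (a - 1 - ε * β)) (Ioc 0 1) := by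
      apply Integrable.const_mul
      have := intervalIntegral.intervalIntegrable_rpow' (a := 0) (b := 1)
        (r := a - 1 - ε * β) (by linarith)
      rwa [intervalIntegrable_iff_integrableOn_Ioc_of_le zero_le_one] at this
    refine hint.mono' ((hcont.mono Ioc_subset_Ioi_self).aestronglyMeasurable measurableSet_Ioc) ?_
    rw [ae_restrict_iff' measurableSet_Ioc]
    filter_upwards with s hs
    obtain ⟨hs0, hs1⟩ := hs
    have hlogb : 1 + |Real.log s| ≤ (1 + 1/ε) * s ^ (-ε) := by
      have h1 : |Real.log s| = Real.log (1/s) := by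
        rw [abs_of_nonpos (Real.log_nonpos hs0.le hs1), Real.log_div one_ne_zero hs0.ne']
        simp
      have h2 : Real.log (1/s) ≤ (1/ε) * s ^ (-ε) := by
        have h3 : Real.log (1/s) = (1/ε) * Real.log ((1/s) ^ ε) := by
          rw [Real.log_rpow (by positivity)]; field_simp
        rw [h3]
        have h4 : Real.log ((1/s)^ε) ≤ (1/s)^ε := (Real.log_le_sub_one_of_pos (by positivity)).trans (by linarith)
        have h5 : (1/s : ℝ) ^ ε = s ^ (-ε) := by
          rw [one_div, Real.inv_rpow hs0.le, ← Real.rpow_neg hs0.le]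
        calc (1/ε) * Real.log ((1/s)^ε) ≤ (1/ε) * ((1/s)^ε) := by
              apply mul_le_mul_of_nonneg_left h4 (by positivity)
          _ = (1/ε) * s ^ (-ε) := by rw [h5]
      have h6 : (1:ℝ) ≤ s ^ (-ε) := by
        apply Real.one_le_rpow_of_pos_of_le_one_of_nonpos hs0 hs1 (by linarith)
      calc 1 + |Real.log s| ≤ s ^ (-ε) + (1/ε) * s ^ (-ε) := by
            rw [h1]; exact add_le_add h6 h2
        _ = (1 + 1/ε) * s ^ (-ε) := by ring
    have hnorm : ‖(1 + |Real.log s|) ^ β * s ^ (a - 1) * Real.exp (-s)‖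
        ≤ (1 + 1/ε) ^ β * s ^ (a - 1 - ε * β) := by
      rw [Real.norm_eq_abs, abs_of_nonneg (by positivity)]
      have hb1 : (1 + |Real.log s|) ^ β ≤ ((1 + 1/ε) * s ^ (-ε)) ^ β :=
        Real.rpow_le_rpow (by positivity) hlogb hβ
      have hb2 : ((1 + 1/ε) * s ^ (-ε)) ^ β = (1 + 1/ε) ^ β * s ^ (-ε * β) := by
        rw [Real.mul_rpow (by positivity) (by positivity), ← Real.rpow_mul hs0.le]
      have hexp : Real.exp (-s) ≤ 1 := Real.exp_le_one_iff.mpr (by linarith)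
      calc (1 + |Real.log s|) ^ β * s ^ (a - 1) * Real.exp (-s)
          ≤ (1 + |Real.log s|) ^ β * s ^ (a - 1) * 1 := by
            apply mul_le_mul_of_nonneg_left hexp (by positivity)
        _ = (1 + |Real.log s|) ^ β * s ^ (a - 1) := by ring
        _ ≤ ((1 + 1/ε) ^ β * s ^ (-ε * β)) * s ^ (a - 1) := by
            rw [← hb2]; exact mul_le_mul_of_nonneg_right hb1 (by positivity)
        _ = (1 + 1/ε) ^ β * s ^ (a - 1 - ε * β) := by
            rw [mul_assoc, ← Real.rpow_add hs0]; ring_nf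
    exact hnorm
  · -- near infinity: dominate by s^(β + a - 1) e^{-s}
    have hint : IntegrableOn (fun s : ℝ => Real.exp (-s) * s ^ ((β + a) - 1)) (Ioi 1) :=
      (Real.GammaIntegral_convergent (by linarith)).mono_set
        (Ioi_subset_Ioi zero_le_one)
    refine hint.mono' ((hcont.mono (Ioi_subset_Ioi zero_le_one)).aestronglyMeasurable
      measurableSet_Ioi) ?_
    rw [ae_restrict_iff' measurableSet_Ioi]
    filter_upwards with s hs
    have hs1 : (1:ℝ) ≤ s := le_of_lt (mem_Ioi.mp hs)
    have hs0 : (0:ℝ) < s := lt_of_lt_of_le one_pos hs1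
    have hlogb : 1 + |Real.log s| ≤ s := by
      have : |Real.log s| = Real.log s := abs_of_nonneg (Real.log_nonneg hs1)
      rw [this]
      linarith [Real.log_le_sub_one_of_pos hs0]
    rw [Real.norm_eq_abs, abs_of_nonneg (by positivity)]
    calc (1 + |Real.log s|) ^ β * s ^ (a - 1) * Real.exp (-s)
        ≤ s ^ β * s ^ (a - 1) * Real.exp (-s) := by
          apply mul_le_mul_of_nonneg_right
            (mul_le_mul_of_nonneg_right (Real.rpow_le_rpow (by positivity) hlogb hβ)
              (by positivity)) (by positivity)
      _ = Real.exp (-s) * s ^ ((β + a) - 1) := by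
          rw [← Real.rpow_add hs0]; ring_nf

lemma scaled_eqOn {a β lam : ℝ} (hlam : 0 < lam) :
    Set.EqOn (fun t : ℝ => lam ^ (1 - a) *
        ((1 + |Real.log (lam * t)|) ^ β * (lam * t) ^ (a - 1) * Real.exp (-(lam * t))))
      (fun t : ℝ => (1 + |Real.log (lam * t)|) ^ β * t ^ (a - 1) * Real.exp (-(lam * t)))
      (Set.Ioi 0) := by
  intro t ht
  have ht0 : 0 < t := mem_Ioi.mp ht
  simp only
  rw [Real.mul_rpow hlam.le ht0.le]
  rw [show lam ^ (1-a) * ((1 + |Real.log (lam*t)|) ^ β * (lam ^ (a-1) * t ^ (a-1)) * Real.exp (-(lam*t)))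
    = (lam ^ (1-a) * lam ^ (a-1)) * ((1 + |Real.log (lam*t)|) ^ β * t ^ (a-1) * Real.exp (-(lam*t))) by ring,
    ← Real.rpow_add hlam]
  norm_num

lemma scaled_integrable {a β lam : ℝ} (ha : 0 < a) (hβ : 0 ≤ β) (hlam : 0 < lam) :
    IntegrableOn (fun t : ℝ => (1 + |Real.log (lam * t)|) ^ β * t ^ (a - 1) *
      Real.exp (-(lam * t))) (Set.Ioi 0) := by
  have hg := integrableOn_kM ha hβ
  have hcomp : IntegrableOn (fun t : ℝ =>
      (1 + |Real.log (lam * t)|) ^ β * (lam * t) ^ (a - 1) * Real.exp (-(lam * t)))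
      (Set.Ioi 0) := by
    have := (integrableOn_Ioi_comp_mul_left_iff
      (fun s : ℝ => (1 + |Real.log s|) ^ β * s ^ (a - 1) * Real.exp (-s)) 0 hlam).mpr
    rw [mul_zero] at this
    exact this hg
  exact IntegrableOn.congr_fun (hcomp.const_mul (lam ^ (1 - a))) (scaled_eqOn hlam) measurableSet_Ioi

lemma scaled_integral {a β lam : ℝ} (ha : 0 < a) (hβ : 0 ≤ β) (hlam : 0 < lam) :
    ∫ t in Set.Ioi (0:ℝ), (1 + |Real.log (lam * t)|) ^ β * t ^ (a - 1) * Real.exp (-(lam * t))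
      = lam ^ (-a) * ∫ s in Set.Ioi (0:ℝ), (1 + |Real.log s|) ^ β * s ^ (a - 1) * Real.exp (-s) := by
  rw [← setIntegral_congr_fun measurableSet_Ioi (scaled_eqOn hlam)]
  rw [integral_const_mul]
  rw [integral_comp_mul_left_Ioi
    (fun s : ℝ => (1 + |Real.log s|) ^ β * s ^ (a - 1) * Real.exp (-s)) 0 hlam]
  rw [mul_zero, smul_eq_mul, ← mul_assoc]
  congr 1
  rw [← Real.rpow_neg_one lam, ← Real.rpow_add hlam]
  ring_nf

lemma weight_integrable {a μ : ℝ} (ha : 0 < a) (hμ : 0 < μ) :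
    IntegrableOn (fun t : ℝ => t ^ (a - 1) * Real.exp (-(μ * t))) (Set.Ioi 0) := by
  refine (scaled_integrable (β := 0) ha le_rfl hμ).congr_fun (fun t ht => ?_) measurableSet_Ioi
  simp [Real.rpow_zero]

lemma key_scalar {b L u rr : ℝ} (hL1 : 1 ≤ L) (hu0 : 0 < u)
    (hu_half : L / 2 ≤ u) (hrr : |u - L| = rr) :
    |u ^ b - L ^ b| ≤ (|b| * 2 ^ |b - 1|) * L ^ (b - 1) * (1 + rr) ^ (max b 1) := by
  have hL0 : (0:ℝ) < L := lt_of_lt_of_le one_pos hL1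
  have hLb1 : (0:ℝ) < L ^ (b - 1) := Real.rpow_pos_of_pos hL0 _
  have hrr0 : (0:ℝ) ≤ rr := hrr ▸ abs_nonneg _
  have h1r : (1:ℝ) ≤ 1 + rr := by linarith
  have h1r0 : (0:ℝ) < 1 + rr := by linarith
  set β := max b 1 with hβdef
  have hβ1 : 1 ≤ β := le_max_right _ _
  have hone : (1:ℝ) ≤ (1 + rr) ^ (β - 1) := by
    have h := Real.rpow_le_rpow_of_exponent_le h1r (show (0:ℝ) ≤ β - 1 by linarith)
    rwa [Real.rpow_zero] at h
  have h2pos : (0:ℝ) < 2 ^ |b - 1| := Real.rpow_pos_of_pos two_pos _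
  have hmaxb : max (u ^ (b - 1)) (L ^ (b - 1))
      ≤ 2 ^ |b - 1| * (L ^ (b - 1) * (1 + rr) ^ (β - 1)) := by
    rcases le_or_gt b 1 with hb | hb
    · have habs1 : |b - 1| = 1 - b := by rw [abs_of_nonpos (by linarith)]; ring
      have hbound : ∀ x : ℝ, L / 2 ≤ x → x ^ (b - 1) ≤ 2 ^ (1 - b) * L ^ (b - 1) := by
        intro x hx
        have hhalf : (0:ℝ) < L / 2 := by linarith
        have h1 : x ^ (b - 1) ≤ (L / 2) ^ (b - 1) :=
          Real.rpow_le_rpow_of_nonpos hhalf hx (by linarith)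
        have h2 : (L / 2) ^ (b - 1) = 2 ^ (1 - b) * L ^ (b - 1) := by
          rw [Real.div_rpow hL0.le (by norm_num : (0:ℝ) ≤ 2), div_eq_mul_inv,
            ← Real.rpow_neg (by norm_num : (0:ℝ) ≤ 2), show -(b - 1) = 1 - b by ring]
          ring
        linarith
      have hm := max_le (hbound _ hu_half) (hbound L (by linarith))
      rw [habs1]
      calc max (u ^ (b - 1)) (L ^ (b - 1)) ≤ 2 ^ (1 - b) * L ^ (b - 1) := hm
        _ ≤ 2 ^ (1 - b) * (L ^ (b - 1) * (1 + rr) ^ (β - 1)) := by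
            rw [mul_le_mul_iff_right₀ (Real.rpow_pos_of_pos two_pos _)]
            exact le_mul_of_one_le_right hLb1.le hone
    · have h2ge1 : (1:ℝ) ≤ 2 ^ |b - 1| := by
        rw [show (1:ℝ) = (2:ℝ) ^ (0:ℝ) by rw [Real.rpow_zero]]
        exact Real.rpow_le_rpow_of_exponent_le one_le_two (abs_nonneg _)
      have hβb : β = b := max_eq_left hb.le
      have huLr : u ≤ L * (1 + rr) := by
        have h1 : u - L ≤ rr := hrr ▸ le_abs_self _
        nlinarith
      have h2 : u ^ (b - 1) ≤ L ^ (b - 1) * (1 + rr) ^ (β - 1) := by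
        rw [hβb, ← Real.mul_rpow hL0.le h1r0.le]
        exact Real.rpow_le_rpow hu0.le huLr (by linarith)
      have h3 : L ^ (b - 1) ≤ L ^ (b - 1) * (1 + rr) ^ (β - 1) :=
        le_mul_of_one_le_right hLb1.le hone
      calc max (u ^ (b - 1)) (L ^ (b - 1)) ≤ L ^ (b - 1) * (1 + rr) ^ (β - 1) :=
            max_le h2 h3
        _ ≤ 2 ^ |b - 1| * (L ^ (b - 1) * (1 + rr) ^ (β - 1)) :=
            le_mul_of_one_le_left (mul_nonneg hLb1.le (by positivity)) h2ge1
  have hsplit : (1 + rr) ^ β = (1 + rr) ^ (β - 1) * (1 + rr) := by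
    nth_rewrite 3 [show (1 + rr) = (1 + rr) ^ (1:ℝ) by rw [Real.rpow_one]]
    rw [← Real.rpow_add h1r0]; ring_nf
  calc |u ^ b - L ^ b|
      ≤ |b| * max (u ^ (b - 1)) (L ^ (b - 1)) * |u - L| := rpow_mvt hu0 hL0
    _ ≤ |b| * (2 ^ |b - 1| * (L ^ (b - 1) * (1 + rr) ^ (β - 1))) * rr := by
        rw [hrr]
        exact mul_le_mul_of_nonneg_right
          (mul_le_mul_of_nonneg_left hmaxb (abs_nonneg b)) (hrr ▸ abs_nonneg _)
    _ ≤ |b| * (2 ^ |b - 1| * (L ^ (b - 1) * (1 + rr) ^ (β - 1))) * (1 + rr) := by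
        apply mul_le_mul_of_nonneg_left (by linarith)
        positivity
    _ = (|b| * 2 ^ |b - 1|) * L ^ (b - 1) * ((1 + rr) ^ (β - 1) * (1 + rr)) := by ring
    _ = (|b| * 2 ^ |b - 1|) * L ^ (b - 1) * (1 + rr) ^ β := by rw [hsplit]

lemma keyA_scalar {b c₀ u L : ℝ} (hc₀ : 0 < c₀) (hcu : c₀ ≤ u) (huL : u ≤ L) :
    |u ^ b - L ^ b| ≤ c₀ ^ b + 2 * L ^ b := by
  have hu0 : 0 < u := lt_of_lt_of_le hc₀ hcu
  have hL0 : 0 < L := lt_of_lt_of_le hu0 huL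
  have hub : u ^ b ≤ c₀ ^ b + L ^ b := by
    rcases le_or_gt 0 b with hb | hb
    · have : u ^ b ≤ L ^ b := Real.rpow_le_rpow hu0.le huL hb
      have hc : (0:ℝ) ≤ c₀ ^ b := (Real.rpow_pos_of_pos hc₀ b).le
      linarith
    · have : u ^ b ≤ c₀ ^ b := Real.rpow_le_rpow_of_nonpos hc₀ hcu hb.le
      have hL : (0:ℝ) ≤ L ^ b := (Real.rpow_pos_of_pos hL0 b).le
      linarith
  have h1 : |u ^ b - L ^ b| ≤ |u ^ b| + |L ^ b| := abs_sub _ _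
  rw [abs_of_pos (Real.rpow_pos_of_pos hu0 b), abs_of_pos (Real.rpow_pos_of_pos hL0 b)] at h1
  linarith

lemma core_est (δ a b lam : ℝ) (hδ0 : 0 < δ) (hδ1 : δ < 1) (ha : 0 < a) (hlam3 : 3 ≤ lam) :
    |(∫ t in Set.Ioc (0:ℝ) δ, (-Real.log t) ^ b * t ^ (a - 1) * Real.exp (-(lam * t)))
        - lam ^ (-a) * Real.log lam ^ b * Real.Gamma a|
      ≤ (|b| * 2 ^ |b - 1|) * Real.log lam ^ (b - 1) *
          (lam ^ (-a) * ∫ s in Set.Ioi (0:ℝ),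
            (1 + |Real.log s|) ^ (max b 1) * s ^ (a - 1) * Real.exp (-s))
        + ((-Real.log δ) ^ b + 2 * Real.log lam ^ b) *
            (Real.exp (-(lam ^ ((1:ℝ)/2)) / 2) * ((2 / lam) ^ a * Real.Gamma a))
        + Real.log lam ^ b * (Real.exp (-(lam * δ) / 2) * ((2 / lam) ^ a * Real.Gamma a)) := by
  set β := max b 1 with hβdef
  have hβ1 : 1 ≤ β := le_max_right _ _
  have hβ0 : 0 ≤ β := zero_le_one.trans hβ1
  have hbβ : b ≤ β := le_max_left _ _
  have hlam0 : (0:ℝ) < lam := by linarith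
  set L := Real.log lam with hLdef
  have hL1 : 1 ≤ L := by
    rw [hLdef, Real.le_log_iff_exp_le hlam0]
    calc Real.exp 1 ≤ 2.7182818286 := Real.exp_one_lt_d9.le
      _ ≤ lam := by linarith
  have hL0 : 0 < L := lt_of_lt_of_le one_pos hL1
  set c₀ := -Real.log δ with hc₀def
  have hc₀ : 0 < c₀ := neg_pos.mpr (Real.log_neg hδ0 hδ1)
  set K := |b| * 2 ^ |b - 1| with hKdef
  have hK0 : 0 ≤ K := mul_nonneg (abs_nonneg _) (Real.rpow_nonneg (by norm_num) _)
  set w : ℝ → ℝ := fun t => t ^ (a - 1) * Real.exp (-(lam * t)) with hwdef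
  set F : ℝ → ℝ := fun t => (1 + |Real.log (lam * t)|) ^ β * t ^ (a - 1) *
    Real.exp (-(lam * t)) with hFdef
  set w2 : ℝ → ℝ := fun t => t ^ (a - 1) * Real.exp (-((lam / 2) * t)) with hw2def
  set M := ∫ s in Set.Ioi (0:ℝ), (1 + |Real.log s|) ^ β * s ^ (a - 1) * Real.exp (-s)
    with hMdef
  set f : ℝ → ℝ := fun t => (-Real.log t) ^ b * t ^ (a - 1) * Real.exp (-(lam * t)) with hfdef
  have hw_int : IntegrableOn w (Set.Ioi 0) := weight_integrable ha hlam0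
  have hw2_int : IntegrableOn w2 (Set.Ioi 0) := weight_integrable ha (by linarith)
  have hF_int : IntegrableOn F (Set.Ioi 0) := scaled_integrable ha hβ0 hlam0
  have hM_int : IntegrableOn
      (fun s : ℝ => (1 + |Real.log s|) ^ β * s ^ (a - 1) * Real.exp (-s)) (Set.Ioi 0) :=
    integrableOn_kM ha hβ0
  -- integrability of f on Ioc 0 δ
  have hf_cont : ContinuousOn f (Set.Ioc 0 δ) := by
    have hlog : ContinuousOn (fun t : ℝ => -Real.log t) (Set.Ioc 0 δ) :=
      (Real.continuousOn_log.mono (fun x hx => by simp [ne_of_gt hx.1])).neg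
    have h1 : ContinuousOn (fun t : ℝ => (-Real.log t) ^ b) (Set.Ioc 0 δ) :=
      hlog.rpow_const (fun x hx =>
        Or.inl (ne_of_gt (neg_pos.mpr (Real.log_neg hx.1 (lt_of_le_of_lt hx.2 hδ1)))))
    have h2 : ContinuousOn (fun t : ℝ => t ^ (a - 1)) (Set.Ioc 0 δ) :=
      continuousOn_id.rpow_const (fun x hx => Or.inl (ne_of_gt hx.1))
    exact (h1.mul h2).mul ((continuous_const.mul continuous_id).neg.rexp.continuousOn)
  have hf_int : IntegrableOn f (Set.Ioc 0 δ) := by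
    refine ((hM_int.mono_set Set.Ioc_subset_Ioi_self).const_mul
      (c₀ ^ (b - β))).mono' (hf_cont.aestronglyMeasurable measurableSet_Ioc) ?_
    rw [ae_restrict_iff' measurableSet_Ioc]
    filter_upwards with t ht
    obtain ⟨ht0, htδ⟩ := ht
    have ht1 : t < 1 := lt_of_le_of_lt htδ hδ1
    have hu0 : 0 < -Real.log t := neg_pos.mpr (Real.log_neg ht0 ht1)
    have huc : c₀ ≤ -Real.log t := neg_le_neg (Real.log_le_log ht0 htδ)
    have hsplit : (-Real.log t) ^ b = (-Real.log t) ^ (b - β) * (-Real.log t) ^ β := by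
      rw [← Real.rpow_add hu0]; ring_nf
    have h1 : (-Real.log t) ^ (b - β) ≤ c₀ ^ (b - β) :=
      Real.rpow_le_rpow_of_nonpos hc₀ huc (sub_nonpos.mpr hbβ)
    have h2 : (-Real.log t) ^ β ≤ (1 + |Real.log t|) ^ β := by
      apply Real.rpow_le_rpow hu0.le _ hβ0
      rw [abs_of_neg (Real.log_neg ht0 ht1)]; linarith
    have h3 : Real.exp (-(lam * t)) ≤ Real.exp (-t) := by
      apply Real.exp_le_exp.mpr
      nlinarith
    have hnorm : ‖f t‖ = (-Real.log t) ^ b * t ^ (a - 1) * Real.exp (-(lam * t)) := by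
      rw [hfdef, Real.norm_eq_abs]
      exact abs_of_nonneg (by positivity)
    rw [hnorm, hsplit]
    have hPE : 0 ≤ t ^ (a - 1) * Real.exp (-(lam * t)) :=
      mul_nonneg (Real.rpow_nonneg ht0.le _) (Real.exp_nonneg _)
    have hYPE : (-Real.log t) ^ β * (t ^ (a - 1) * Real.exp (-(lam * t)))
        ≤ (1 + |Real.log t|) ^ β * (t ^ (a - 1) * Real.exp (-t)) :=
      mul_le_mul h2 (mul_le_mul_of_nonneg_left h3 (Real.rpow_nonneg ht0.le _)) hPE
        (Real.rpow_nonneg (by positivity) _)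
    have hfinal : (-Real.log t) ^ (b - β) * ((-Real.log t) ^ β * (t ^ (a - 1) *
        Real.exp (-(lam * t)))) ≤ c₀ ^ (b - β) * ((1 + |Real.log t|) ^ β * (t ^ (a - 1) *
        Real.exp (-t))) :=
      mul_le_mul h1 hYPE (mul_nonneg (Real.rpow_nonneg (neg_nonneg.mpr
        (Real.log_nonpos ht0.le ht1.le)) _) hPE) (Real.rpow_nonneg hc₀.le _)
    refine le_trans (le_of_eq (by ring)) (le_trans hfinal (le_of_eq (by ring)))
  -- Gamma identity
  have hGamma : lam ^ (-a) * Real.Gamma a = ∫ t in Set.Ioi (0:ℝ), w t := by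
    rw [hwdef, Real.integral_rpow_mul_exp_neg_mul_Ioi ha hlam0, one_div,
      Real.inv_rpow hlam0.le, Real.rpow_neg hlam0.le]
  have hsplitInt : ∫ t in Set.Ioi (0:ℝ), w t
      = (∫ t in Set.Ioc (0:ℝ) δ, w t) + ∫ t in Set.Ioi δ, w t := by
    rw [← Ioc_union_Ioi_eq_Ioi hδ0.le]
    exact setIntegral_union Ioc_disjoint_Ioi_same measurableSet_Ioi
      (hw_int.mono_set Set.Ioc_subset_Ioi_self) (hw_int.mono_set (Ioi_subset_Ioi hδ0.le))
  have hdiff : (∫ t in Set.Ioc (0:ℝ) δ, f t) - lam ^ (-a) * L ^ b * Real.Gamma a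
      = (∫ t in Set.Ioc (0:ℝ) δ, (f t - L ^ b * w t)) - L ^ b * ∫ t in Set.Ioi δ, w t := by
    rw [integral_sub hf_int ((hw_int.mono_set Set.Ioc_subset_Ioi_self).const_mul _),
      integral_const_mul]
    have e1 : lam ^ (-a) * L ^ b * Real.Gamma a
        = L ^ b * ∫ t in Set.Ioi (0:ℝ), w t := by rw [← hGamma]; ring
    rw [e1, hsplitInt]; ring
  -- positivity facts
  have hc₀b : (0:ℝ) < c₀ ^ b := Real.rpow_pos_of_pos hc₀ b
  have hLb : (0:ℝ) < L ^ b := Real.rpow_pos_of_pos hL0 b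
  have hLb1 : (0:ℝ) < L ^ (b - 1) := Real.rpow_pos_of_pos hL0 _
  set Φ : ℝ → ℝ := fun t => K * L ^ (b - 1) * F t
    + (c₀ ^ b + 2 * L ^ b) * (Real.exp (-(lam ^ ((1:ℝ)/2)) / 2) * w2 t) with hΦdef
  have hΦ_int : IntegrableOn Φ (Set.Ioi 0) :=
    (hF_int.const_mul _).add ((hw2_int.const_mul _).const_mul _)
  -- the pointwise bound
  have hpoint : ∀ t ∈ Set.Ioc (0:ℝ) δ, ‖f t - L ^ b * w t‖ ≤ Φ t := by
    intro t ht
    obtain ⟨ht0, htδ⟩ := ht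
    have ht1 : t < 1 := lt_of_le_of_lt htδ hδ1
    have hu0 : 0 < -Real.log t := neg_pos.mpr (Real.log_neg ht0 ht1)
    have huc : c₀ ≤ -Real.log t := neg_le_neg (Real.log_le_log ht0 htδ)
    have hwnn : (0:ℝ) ≤ t ^ (a - 1) * Real.exp (-(lam * t)) :=
      mul_nonneg (Real.rpow_nonneg ht0.le _) (Real.exp_nonneg _)
    have hw2nn : (0:ℝ) ≤ w2 t := by
      simp only [hw2def]
      exact mul_nonneg (Real.rpow_nonneg ht0.le _) (Real.exp_nonneg _)
    have hFnn : (0:ℝ) ≤ F t := by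
      simp only [hFdef]
      exact mul_nonneg (mul_nonneg (Real.rpow_nonneg (by positivity) _)
        (Real.rpow_nonneg ht0.le _)) (Real.exp_nonneg _)
    have habs : ‖f t - L ^ b * w t‖
        = |(-Real.log t) ^ b - L ^ b| * (t ^ (a - 1) * Real.exp (-(lam * t))) := by
      simp only [hfdef, hwdef, Real.norm_eq_abs]
      rw [show (-Real.log t) ^ b * t ^ (a - 1) * Real.exp (-(lam * t)) -
          L ^ b * (t ^ (a - 1) * Real.exp (-(lam * t)))
          = ((-Real.log t) ^ b - L ^ b) * (t ^ (a - 1) * Real.exp (-(lam * t))) from by ring,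
        abs_mul, abs_of_nonneg hwnn]
    rw [habs]
    have hr : |(-Real.log t) - L| = |Real.log (lam * t)| := by
      rw [abs_sub_comm, Real.log_mul hlam0.ne' ht0.ne', ← hLdef]
      congr 1
      ring
    rcases le_or_gt t (lam ^ (-((1:ℝ)/2))) with hcase | hcase
    · -- region B : t small
      have hth : L / 2 ≤ -Real.log t := by
        have h1 := Real.log_le_log ht0 hcase
        rw [Real.log_rpow hlam0, ← hLdef] at h1
        linarith
      have hkey := key_scalar (b := b) hL1 hu0 hth hr
      have hBB : |(-Real.log t) ^ b - L ^ b| * (t ^ (a - 1) * Real.exp (-(lam * t)))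
          ≤ K * L ^ (b - 1) * F t := by
        have e1 : K * L ^ (b - 1) * F t
            = ((|b| * 2 ^ |b - 1|) * L ^ (b - 1) * (1 + |Real.log (lam * t)|) ^ β) *
              (t ^ (a - 1) * Real.exp (-(lam * t))) := by
          simp only [hFdef, hKdef]; ring
        rw [e1, hβdef]
        exact mul_le_mul_of_nonneg_right hkey hwnn
      have h2nn : (0:ℝ) ≤ (c₀ ^ b + 2 * L ^ b) *
          (Real.exp (-(lam ^ ((1:ℝ)/2)) / 2) * w2 t) :=
        mul_nonneg (by linarith) (mul_nonneg (Real.exp_nonneg _) hw2nn)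
      simp only [hΦdef]
      linarith
    · -- region A : t large
      have huL2 : -Real.log t ≤ L := by
        have h1 := Real.log_le_log (Real.rpow_pos_of_pos hlam0 _) hcase.le
        rw [Real.log_rpow hlam0, ← hLdef] at h1
        linarith
      have hkeyA := keyA_scalar (b := b) hc₀ huc huL2
      have hwb : t ^ (a - 1) * Real.exp (-(lam * t))
          ≤ Real.exp (-(lam ^ ((1:ℝ)/2)) / 2) * w2 t := by
        have hlt : lam ^ ((1:ℝ)/2) ≤ lam * t := by
          have h1 : lam * lam ^ (-((1:ℝ)/2)) = lam ^ ((1:ℝ)/2) := by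
            nth_rewrite 1 [← Real.rpow_one lam]
            rw [← Real.rpow_add hlam0]
            norm_num
          have h2 := mul_le_mul_of_nonneg_left hcase.le hlam0.le
          rw [h1] at h2
          exact h2
        have hexp : Real.exp (-(lam * t))
            = Real.exp (-((lam/2) * t)) * Real.exp (-((lam/2) * t)) := by
          rw [← Real.exp_add]; ring_nf
        have hexp2 : Real.exp (-((lam/2) * t)) ≤ Real.exp (-(lam ^ ((1:ℝ)/2)) / 2) := by
          apply Real.exp_le_exp.mpr
          linarith
        calc t ^ (a - 1) * Real.exp (-(lam * t))
            = (t ^ (a - 1) * Real.exp (-((lam/2) * t))) * Real.exp (-((lam/2) * t)) := by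
              rw [hexp]; ring
          _ ≤ (t ^ (a - 1) * Real.exp (-((lam/2) * t))) * Real.exp (-(lam ^ ((1:ℝ)/2)) / 2) :=
              mul_le_mul_of_nonneg_left hexp2
                (mul_nonneg (Real.rpow_nonneg ht0.le _) (Real.exp_nonneg _))
          _ = Real.exp (-(lam ^ ((1:ℝ)/2)) / 2) * w2 t := by
              simp only [hw2def]; ring
      have hAA : |(-Real.log t) ^ b - L ^ b| * (t ^ (a - 1) * Real.exp (-(lam * t)))
          ≤ (c₀ ^ b + 2 * L ^ b) * (Real.exp (-(lam ^ ((1:ℝ)/2)) / 2) * w2 t) :=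
        mul_le_mul hkeyA hwb hwnn (by linarith)
      have h1nn : (0:ℝ) ≤ K * L ^ (b - 1) * F t := mul_nonneg (mul_nonneg hK0 hLb1.le) hFnn
      simp only [hΦdef]
      linarith
  -- integral bounds
  have hmain : ‖∫ t in Set.Ioc (0:ℝ) δ, (f t - L ^ b * w t)‖
      ≤ ∫ t in Set.Ioc (0:ℝ) δ, Φ t :=
    norm_integral_le_of_norm_le (hΦ_int.mono_set Set.Ioc_subset_Ioi_self)
      ((ae_restrict_iff' measurableSet_Ioc).mpr (ae_of_all _ hpoint))
  have hΦ_nonneg : ∀ t, t ∈ Set.Ioi (0:ℝ) → 0 ≤ Φ t := by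
    intro t ht
    have ht0 : (0:ℝ) < t := ht
    have hFnn : (0:ℝ) ≤ F t := by
      simp only [hFdef]
      exact mul_nonneg (mul_nonneg (Real.rpow_nonneg (by positivity) _)
        (Real.rpow_nonneg ht0.le _)) (Real.exp_nonneg _)
    have hw2nn : (0:ℝ) ≤ w2 t := by
      simp only [hw2def]
      exact mul_nonneg (Real.rpow_nonneg ht0.le _) (Real.exp_nonneg _)
    simp only [hΦdef]
    have hcc : (0:ℝ) ≤ c₀ ^ b + 2 * L ^ b := by linarith
    exact add_nonneg (mul_nonneg (mul_nonneg hK0 hLb1.le) hFnn)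
      (mul_nonneg hcc (mul_nonneg (Real.exp_nonneg _) hw2nn))
  have h0le : (0:ℝ→ℝ) ≤ᵐ[volume.restrict (Set.Ioi 0)] Φ := by
    rw [Filter.EventuallyLE, ae_restrict_iff' measurableSet_Ioi]
    filter_upwards with t ht
    simpa using hΦ_nonneg t ht
  have hmono2 : ∫ t in Set.Ioc (0:ℝ) δ, Φ t ≤ ∫ t in Set.Ioi (0:ℝ), Φ t :=
    setIntegral_mono_set hΦ_int h0le
      (HasSubset.Subset.eventuallyLE Set.Ioc_subset_Ioi_self)
  have hΦ_val : ∫ t in Set.Ioi (0:ℝ), Φ t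
      = K * L ^ (b - 1) * (lam ^ (-a) * M)
        + (c₀ ^ b + 2 * L ^ b) *
            (Real.exp (-(lam ^ ((1:ℝ)/2)) / 2) * ((2/lam) ^ a * Real.Gamma a)) := by
    simp only [hΦdef, hFdef, hw2def]
    rw [integral_add]
    · congr 1
      · rw [integral_const_mul, scaled_integral ha hβ0 hlam0, ← hMdef]
      · rw [integral_const_mul, integral_const_mul,
          Real.integral_rpow_mul_exp_neg_mul_Ioi ha (by linarith : (0:ℝ) < lam/2),
          one_div_div]
    · exact hF_int.const_mul _
    · exact (hw2_int.const_mul _).const_mul _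
  -- tail bound
  have hw2_0le : (0:ℝ→ℝ) ≤ᵐ[volume.restrict (Set.Ioi 0)] w2 := by
    rw [Filter.EventuallyLE, ae_restrict_iff' measurableSet_Ioi]
    filter_upwards with t ht
    have ht0 : (0:ℝ) < t := ht
    simp only [hw2def, Pi.zero_apply]
    exact mul_nonneg (Real.rpow_nonneg ht0.le _) (Real.exp_nonneg _)
  have htail : ∫ t in Set.Ioi δ, w t
      ≤ Real.exp (-(lam * δ) / 2) * ((2/lam) ^ a * Real.Gamma a) := by
    have hptw : ∀ t ∈ Set.Ioi δ, w t ≤ Real.exp (-(lam * δ) / 2) * w2 t := by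
      intro t ht
      have htδ : δ < t := ht
      have ht0 : (0:ℝ) < t := hδ0.trans htδ
      have hexp : Real.exp (-(lam * t))
          = Real.exp (-((lam/2) * t)) * Real.exp (-((lam/2) * t)) := by
        rw [← Real.exp_add]; ring_nf
      have hexp2 : Real.exp (-((lam/2) * t)) ≤ Real.exp (-(lam * δ) / 2) := by
        apply Real.exp_le_exp.mpr
        have h5 := mul_le_mul_of_nonneg_left htδ.le hlam0.le
        linarith
      simp only [hwdef, hw2def]
      calc t ^ (a - 1) * Real.exp (-(lam * t))
          = (t ^ (a - 1) * Real.exp (-((lam/2) * t))) * Real.exp (-((lam/2) * t)) := by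
            rw [hexp]; ring
        _ ≤ (t ^ (a - 1) * Real.exp (-((lam/2) * t))) * Real.exp (-(lam * δ) / 2) :=
            mul_le_mul_of_nonneg_left hexp2
              (mul_nonneg (Real.rpow_nonneg ht0.le _) (Real.exp_nonneg _))
        _ = Real.exp (-(lam * δ) / 2) * (t ^ (a - 1) * Real.exp (-((lam/2) * t))) := by ring
    have h1 : ∫ t in Set.Ioi δ, w t ≤ ∫ t in Set.Ioi δ, Real.exp (-(lam * δ) / 2) * w2 t :=
      setIntegral_mono_on (hw_int.mono_set (Ioi_subset_Ioi hδ0.le))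
        ((hw2_int.mono_set (Ioi_subset_Ioi hδ0.le)).const_mul _) measurableSet_Ioi hptw
    have h3 : ∫ t in Set.Ioi δ, w2 t ≤ ∫ t in Set.Ioi (0:ℝ), w2 t :=
      setIntegral_mono_set hw2_int hw2_0le
        (HasSubset.Subset.eventuallyLE (Ioi_subset_Ioi hδ0.le))
    have h4 : ∫ t in Set.Ioi (0:ℝ), w2 t = (2/lam) ^ a * Real.Gamma a := by
      simp only [hw2def]
      rw [Real.integral_rpow_mul_exp_neg_mul_Ioi ha (by linarith : (0:ℝ) < lam/2),
        one_div_div]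
    have h2 : ∫ t in Set.Ioi δ, Real.exp (-(lam * δ) / 2) * w2 t
        ≤ Real.exp (-(lam * δ) / 2) * ((2/lam) ^ a * Real.Gamma a) := by
      rw [integral_const_mul]
      apply mul_le_mul_of_nonneg_left _ (Real.exp_nonneg _)
      rw [← h4]
      exact h3
    linarith
  have htail0 : 0 ≤ ∫ t in Set.Ioi δ, w t := by
    apply setIntegral_nonneg measurableSet_Ioi
    intro t ht
    have ht0 : (0:ℝ) < t := hδ0.trans ht
    simp only [hwdef]
    exact mul_nonneg (Real.rpow_nonneg ht0.le _) (Real.exp_nonneg _)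
  -- final assembly
  rw [hdiff]
  have habs2 : |(∫ t in Set.Ioc (0:ℝ) δ, (f t - L ^ b * w t)) - L ^ b * ∫ t in Set.Ioi δ, w t|
      ≤ |∫ t in Set.Ioc (0:ℝ) δ, (f t - L ^ b * w t)| + |L ^ b * ∫ t in Set.Ioi δ, w t| :=
    abs_sub _ _
  have e1 : |L ^ b * ∫ t in Set.Ioi δ, w t| = L ^ b * ∫ t in Set.Ioi δ, w t :=
    abs_of_nonneg (mul_nonneg hLb.le htail0)
  have e2 : L ^ b * (∫ t in Set.Ioi δ, w t)
      ≤ L ^ b * (Real.exp (-(lam * δ) / 2) * ((2/lam) ^ a * Real.Gamma a)) :=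
    mul_le_mul_of_nonneg_left htail hLb.le
  rw [Real.norm_eq_abs] at hmain
  rw [hΦ_val] at hmono2
  linarith

/-- Erdélyi-type logarithmic Watson lemma, leading term: for `0 < δ < 1`,
`a > 0` and real `b`,
`∫_0^δ (-log t)^b t^{a-1} e^{-λ t} dt = λ^{-a} (log λ)^b [Γ(a) + O(1/log λ)]`
as `λ → +∞`. -/
theorem log_watson_leading_term (δ : ℝ) (hδ0 : 0 < δ) (hδ1 : δ < 1)
    (a : ℝ) (ha : 0 < a) (b : ℝ) :
    ∃ C Λ : ℝ, 0 < Λ ∧ ∀ lam : ℝ, Λ ≤ lam →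
      |(∫ t in Set.Ioc (0 : ℝ) δ,
            (-Real.log t) ^ b * t ^ (a - 1) * Real.exp (-(lam * t))) -
          lam ^ (-a) * Real.log lam ^ b * Real.Gamma a| ≤
        lam ^ (-a) * Real.log lam ^ b * (C / Real.log lam) := by
  set c₀ := -Real.log δ with hc₀def
  have hc₀ : 0 < c₀ := neg_pos.mpr (Real.log_neg hδ0 hδ1)
  set M := ∫ s in Set.Ioi (0:ℝ),
    (1 + |Real.log s|) ^ (max b 1) * s ^ (a - 1) * Real.exp (-s) with hMdef
  have hM0 : 0 ≤ M :=
    setIntegral_nonneg measurableSet_Ioi (fun s hs =>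
      mul_nonneg (mul_nonneg (Real.rpow_nonneg (by positivity) _)
        (Real.rpow_nonneg (le_of_lt hs) _)) (Real.exp_nonneg _))
  set K := |b| * 2 ^ |b - 1| with hKdef
  have hK0 : 0 ≤ K := mul_nonneg (abs_nonneg _) (Real.rpow_nonneg (by norm_num) _)
  set m' := max (1 - b) 1 with hm'def
  have hm'1 : 1 ≤ m' := le_max_right _ _
  have hm'0 : 0 ≤ m' := zero_le_one.trans hm'1
  have hΓ : 0 < Real.Gamma a := Real.Gamma_pos_of_pos ha
  set D := (c₀ ^ b + 2) * (2 ^ a * Real.Gamma a) * 2 ^ m' with hDdef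
  -- eventual smallness of middle term factor
  have hG : Tendsto (fun lam : ℝ =>
      D * ((lam ^ ((1:ℝ)/2)) ^ m' * Real.exp (-(1/2) * lam ^ ((1:ℝ)/2)))) atTop (nhds 0) := by
    have h1 := tendsto_rpow_mul_exp_neg_mul_atTop_nhds_zero m' (1/2) (by norm_num)
    have h2 := tendsto_rpow_atTop (show (0:ℝ) < (1:ℝ)/2 by norm_num)
    have h3 := h1.comp h2
    have h4 := h3.const_mul D
    simpa using h4
  have hGev : ∀ᶠ lam : ℝ in atTop,
      D * ((lam ^ ((1:ℝ)/2)) ^ m' * Real.exp (-(1/2) * lam ^ ((1:ℝ)/2))) ≤ 1 :=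
    hG.eventually_le_const one_pos
  have hH : Tendsto (fun lam : ℝ =>
      (2 ^ a * Real.Gamma a) * (lam ^ (1:ℝ) * Real.exp (-(δ/2) * lam))) atTop (nhds 0) := by
    have h1 := tendsto_rpow_mul_exp_neg_mul_atTop_nhds_zero 1 (δ/2) (by linarith)
    have h2 := h1.const_mul (2 ^ a * Real.Gamma a)
    simpa using h2
  have hHev : ∀ᶠ lam : ℝ in atTop,
      (2 ^ a * Real.Gamma a) * (lam ^ (1:ℝ) * Real.exp (-(δ/2) * lam)) ≤ 1 :=
    hH.eventually_le_const one_pos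
  have hev : ∀ᶠ lam : ℝ in atTop,
      |(∫ t in Set.Ioc (0 : ℝ) δ,
            (-Real.log t) ^ b * t ^ (a - 1) * Real.exp (-(lam * t))) -
          lam ^ (-a) * Real.log lam ^ b * Real.Gamma a| ≤
        lam ^ (-a) * Real.log lam ^ b * ((K * M + 2) / Real.log lam) := by
    filter_upwards [eventually_ge_atTop (3:ℝ), hGev, hHev] with lam hlam3 hGe hHe
    have hlam0 : (0:ℝ) < lam := by linarith
    set L := Real.log lam with hLdef
    have hL1 : 1 ≤ L := by
      rw [hLdef, Real.le_log_iff_exp_le hlam0]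
      calc Real.exp 1 ≤ 2.7182818286 := Real.exp_one_lt_d9.le
        _ ≤ lam := by linarith
    have hL0 : 0 < L := lt_of_lt_of_le one_pos hL1
    have hLb : (0:ℝ) < L ^ b := Real.rpow_pos_of_pos hL0 b
    have hLb1 : (0:ℝ) < L ^ (b - 1) := Real.rpow_pos_of_pos hL0 _
    have hL1b : (0:ℝ) < L ^ (1 - b) := Real.rpow_pos_of_pos hL0 _
    have hlama : (0:ℝ) < lam ^ (-a) := Real.rpow_pos_of_pos hlam0 _
    have hc₀b : (0:ℝ) < c₀ ^ b := Real.rpow_pos_of_pos hc₀ b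
    have hLL : L ^ (b - 1) * L ^ (1 - b) = 1 := by
      rw [← Real.rpow_add hL0]; norm_num
    have hLbL : L ^ b * L ^ (1 - b) = L := by
      rw [← Real.rpow_add hL0]; norm_num
    have h2lam : (2 / lam) ^ a = 2 ^ a * lam ^ (-a) := by
      rw [Real.div_rpow (by norm_num) hlam0.le, Real.rpow_neg hlam0.le, div_eq_mul_inv]
    -- bound on L
    set y := lam ^ ((1:ℝ)/2) with hydef
    have hy0 : 0 < y := Real.rpow_pos_of_pos hlam0 _
    have hLy : L ≤ 2 * y := by
      have h1 : Real.log y = (1/2) * L := by rw [hydef, Real.log_rpow hlam0]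
      have h2 : Real.log y ≤ y := by linarith [Real.log_le_sub_one_of_pos hy0]
      linarith
    have hLlam : L ≤ lam := by linarith [Real.log_le_sub_one_of_pos hlam0]
    -- middle term bound
    have hmid : (c₀ ^ b + 2 * L ^ b) * (Real.exp (-y / 2) * ((2 / lam) ^ a * Real.Gamma a))
        ≤ lam ^ (-a) * L ^ (b - 1) := by
      have hexpy : Real.exp (-y / 2) = Real.exp (-(1/2) * y) := by congr 1; ring
      have hstep : ((c₀ ^ b + 2 * L ^ b) * (2 ^ a * Real.Gamma a) * Real.exp (-(1/2) * y))
          * L ^ (1 - b) ≤ 1 := by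
        have e1 : ((c₀ ^ b + 2 * L ^ b) * (2 ^ a * Real.Gamma a) * Real.exp (-(1/2) * y))
            * L ^ (1 - b)
            = (c₀ ^ b * L ^ (1 - b) + 2 * (L ^ b * L ^ (1 - b))) * (2 ^ a * Real.Gamma a)
              * Real.exp (-(1/2) * y) := by ring
        have hLm' : (0:ℝ) < L ^ m' := Real.rpow_pos_of_pos hL0 _
        have b1 : c₀ ^ b * L ^ (1 - b) ≤ c₀ ^ b * L ^ m' :=
          mul_le_mul_of_nonneg_left
            (Real.rpow_le_rpow_of_exponent_le hL1 (le_max_left _ _)) hc₀b.le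
        have b2 : L ≤ L ^ m' := by
          have := Real.rpow_le_rpow_of_exponent_le hL1 hm'1
          rwa [Real.rpow_one] at this
        have b3 : L ^ m' ≤ 2 ^ m' * y ^ m' := by
          rw [← Real.mul_rpow (by norm_num) hy0.le]
          exact Real.rpow_le_rpow hL0.le hLy hm'0
        have hexppos : (0:ℝ) < Real.exp (-(1/2) * y) := Real.exp_pos _
        have h2aΓ : (0:ℝ) < 2 ^ a * Real.Gamma a :=
          mul_pos (Real.rpow_pos_of_pos two_pos a) hΓ
        rw [e1, hLbL]
        calc (c₀ ^ b * L ^ (1 - b) + 2 * L) * (2 ^ a * Real.Gamma a) * Real.exp (-(1/2) * y)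
            ≤ ((c₀ ^ b + 2) * L ^ m') * (2 ^ a * Real.Gamma a) * Real.exp (-(1/2) * y) := by
              have : c₀ ^ b * L ^ (1 - b) + 2 * L ≤ (c₀ ^ b + 2) * L ^ m' := by
                have := b1
                nlinarith [hLm', hc₀b]
              exact mul_le_mul_of_nonneg_right
                (mul_le_mul_of_nonneg_right this h2aΓ.le) hexppos.le
          _ ≤ ((c₀ ^ b + 2) * (2 ^ m' * y ^ m')) * (2 ^ a * Real.Gamma a)
              * Real.exp (-(1/2) * y) := by
              have hcp : (0:ℝ) ≤ c₀ ^ b + 2 := by linarith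
              exact mul_le_mul_of_nonneg_right (mul_le_mul_of_nonneg_right
                (mul_le_mul_of_nonneg_left b3 hcp) h2aΓ.le) hexppos.le
          _ = D * (y ^ m' * Real.exp (-(1/2) * y)) := by rw [hDdef]; ring
          _ ≤ 1 := hGe
      -- convert
      have hfin : (c₀ ^ b + 2 * L ^ b) * (2 ^ a * Real.Gamma a) * Real.exp (-(1/2) * y)
          ≤ L ^ (b - 1) := by
        have h5 := mul_le_mul_of_nonneg_right hstep hLb1.le
        rw [one_mul, mul_assoc _ (L ^ (1-b)) _, mul_comm (L ^ (1-b)) _, ← mul_assoc] at h5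
        rw [mul_assoc _ (L ^ (b-1)) _, hLL, mul_one] at h5
        exact h5
      calc (c₀ ^ b + 2 * L ^ b) * (Real.exp (-y / 2) * ((2 / lam) ^ a * Real.Gamma a))
          = lam ^ (-a) * ((c₀ ^ b + 2 * L ^ b) * (2 ^ a * Real.Gamma a)
              * Real.exp (-(1/2) * y)) := by rw [h2lam, hexpy]; ring
        _ ≤ lam ^ (-a) * L ^ (b - 1) := mul_le_mul_of_nonneg_left hfin hlama.le
    -- tail term bound
    have htael : L ^ b * (Real.exp (-(lam * δ) / 2) * ((2 / lam) ^ a * Real.Gamma a))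
        ≤ lam ^ (-a) * L ^ (b - 1) := by
      have hexpd : Real.exp (-(lam * δ) / 2) = Real.exp (-(δ/2) * lam) := by congr 1; ring
      have hstep : (L ^ b * (2 ^ a * Real.Gamma a) * Real.exp (-(δ/2) * lam)) * L ^ (1 - b)
          ≤ 1 := by
        have e1 : (L ^ b * (2 ^ a * Real.Gamma a) * Real.exp (-(δ/2) * lam)) * L ^ (1 - b)
            = (L ^ b * L ^ (1 - b)) * (2 ^ a * Real.Gamma a) * Real.exp (-(δ/2) * lam) := by
          ring
        rw [e1, hLbL]
        calc L * (2 ^ a * Real.Gamma a) * Real.exp (-(δ/2) * lam)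
            ≤ lam * (2 ^ a * Real.Gamma a) * Real.exp (-(δ/2) * lam) := by
              have h2aΓ : (0:ℝ) < 2 ^ a * Real.Gamma a :=
                mul_pos (Real.rpow_pos_of_pos two_pos a) hΓ
              exact mul_le_mul_of_nonneg_right
                (mul_le_mul_of_nonneg_right hLlam h2aΓ.le) (Real.exp_pos _).le
          _ = (2 ^ a * Real.Gamma a) * (lam ^ (1:ℝ) * Real.exp (-(δ/2) * lam)) := by
              rw [Real.rpow_one]; ring
          _ ≤ 1 := hHe
      have hfin : L ^ b * (2 ^ a * Real.Gamma a) * Real.exp (-(δ/2) * lam) ≤ L ^ (b - 1) := by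
        have h5 := mul_le_mul_of_nonneg_right hstep hLb1.le
        rw [one_mul, mul_assoc _ (L ^ (1-b)) _, mul_comm (L ^ (1-b)) _, ← mul_assoc] at h5
        rw [mul_assoc _ (L ^ (b-1)) _, hLL, mul_one] at h5
        exact h5
      calc L ^ b * (Real.exp (-(lam * δ) / 2) * ((2 / lam) ^ a * Real.Gamma a))
          = lam ^ (-a) * (L ^ b * (2 ^ a * Real.Gamma a) * Real.exp (-(δ/2) * lam)) := by
            rw [h2lam, hexpd]; ring
        _ ≤ lam ^ (-a) * L ^ (b - 1) := mul_le_mul_of_nonneg_left hfin hlama.le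
    -- combine with core estimate
    have hcore := core_est δ a b lam hδ0 hδ1 ha hlam3
    rw [← hc₀def, ← hMdef, ← hKdef, ← hLdef, ← hydef] at hcore
    have hRHS : lam ^ (-a) * L ^ b * ((K * M + 2) / L)
        = K * M * (lam ^ (-a) * L ^ (b - 1)) + 2 * (lam ^ (-a) * L ^ (b - 1)) := by
      have hLb1eq : L ^ (b - 1) = L ^ b / L := by
        rw [Real.rpow_sub hL0, Real.rpow_one]
      rw [hLb1eq]
      field_simp
    rw [hRHS]
    have hfirst : K * L ^ (b - 1) * (lam ^ (-a) * M) = K * M * (lam ^ (-a) * L ^ (b - 1)) := by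
      ring
    linarith [hcore, hmid, htael]
  obtain ⟨Λ₀, hΛ₀⟩ := eventually_atTop.mp hev
  refine ⟨K * M + 2, max Λ₀ 3, lt_of_lt_of_le (by norm_num) (le_max_right _ _), ?_⟩
  intro lam hlam
  exact hΛ₀ lam (le_trans (le_max_left _ _) hlam)
end
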